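/- If coherent words P_1…P_n and Q_1…Q_m of starters and terminators are equivalent under the congruence ~, then their gluings agree: P_1*…*P_n ≅ Q_1*…*Q_m. -/

import Mathlib

set_option maxHeartbeats 1000000

universe u v w

/-- An ipomset over event universe `E` and alphabet `A`:
a finite set of events with a precedence order `lt`, an event order `evord`,
source and target sets, and a labeling. -/
structure Ipomset (E : Type u) (A : Type v) where
  events : Finset E
  lt : E → E → Prop
  evord : E → E → Prop
  src : Finset E
  tgt : Finset E
  lab : E → A
  lt_mem : ∀ {x y}, lt x y → x ∈ events ∧ y ∈ events
  evord_mem : ∀ {x y}, evord x y → x ∈ events ∧ y ∈ events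
  lt_irrefl : ∀ x, ¬ lt x x
  lt_trans : ∀ {x y z}, lt x y → lt y z → lt x z
  evord_irrefl : ∀ x, ¬ evord x x
  evord_trans : ∀ {x y z}, evord x y → evord y z → evord x z
  order_total : ∀ {x y}, x ∈ events → y ∈ events → x ≠ y →
      lt x y ∨ lt y x ∨ evord x y ∨ evord y x
  src_sub : src ⊆ events
  tgt_sub : tgt ⊆ events
  src_min : ∀ {x y}, x ∈ src → ¬ lt y x
  tgt_max : ∀ {x y}, x ∈ tgt → ¬ lt x y

namespace Ipomset

variable {E : Type u} {A : Type v}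

/-- An ipomset is interval if its precedence order admits an interval representation. -/
def Interval (P : Ipomset E A) : Prop :=
  ∃ b e : E → ℝ, (∀ x ∈ P.events, b x ≤ e x) ∧
    ∀ x ∈ P.events, ∀ y ∈ P.events, (P.lt x y ↔ e x < b y)

/-- Discrete: empty precedence order. -/
def Discrete (P : Ipomset E A) : Prop := ∀ x y, ¬ P.lt x y

/-- A starter is a discrete ipomset with `tgt = events`. -/
def Starter (P : Ipomset E A) : Prop := P.Discrete ∧ P.tgt = P.events

/-- A terminator is a discrete ipomset with `src = events`. -/
def Terminator (P : Ipomset E A) : Prop := P.Discrete ∧ P.src = P.events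

/-- An identity is a discrete ipomset with `src = tgt = events`. -/
def IsIdentity (P : Ipomset E A) : Prop :=
  P.Discrete ∧ P.src = P.events ∧ P.tgt = P.events

end Ipomset

/-- A conclist: a finite set with a strict total order (the event order) and labeling. -/
structure Conclist (E : Type u) (A : Type v) where
  events : Finset E
  evord : E → E → Prop
  lab : E → Option A
  evord_mem : ∀ {x y}, evord x y → x ∈ events ∧ y ∈ events
  evord_irrefl : ∀ x, ¬ evord x x
  evord_trans : ∀ {x y z}, evord x y → evord y z → evord x z
  evord_total : ∀ {x y}, x ∈ events → y ∈ events → x ≠ y → evord x y ∨ evord y x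

variable {E : Type u} {A : Type v}

/-- The source interface of an ipomset: the conclist on its source set. -/
def Ipomset.srcIface [DecidableEq E] (P : Ipomset E A) : Conclist E A where
  events := P.src
  evord x y := x ∈ P.src ∧ y ∈ P.src ∧ P.evord x y
  lab x := if x ∈ P.src then some (P.lab x) else none
  evord_mem h := ⟨h.1, h.2.1⟩
  evord_irrefl x h := P.evord_irrefl x h.2.2
  evord_trans h1 h2 := ⟨h1.1, h2.2.1, P.evord_trans h1.2.2 h2.2.2⟩
  evord_total {x y} hx hy hxy := by
    rcases P.order_total (P.src_sub hx) (P.src_sub hy) hxy with h | h | h | h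
    · exact absurd h (P.src_min hy)
    · exact absurd h (P.src_min hx)
    · exact Or.inl ⟨hx, hy, h⟩
    · exact Or.inr ⟨hy, hx, h⟩

/-- The target interface of an ipomset: the conclist on its target set. -/
def Ipomset.tgtIface [DecidableEq E] (P : Ipomset E A) : Conclist E A where
  events := P.tgt
  evord x y := x ∈ P.tgt ∧ y ∈ P.tgt ∧ P.evord x y
  lab x := if x ∈ P.tgt then some (P.lab x) else none
  evord_mem h := ⟨h.1, h.2.1⟩
  evord_irrefl x h := P.evord_irrefl x h.2.2
  evord_trans h1 h2 := ⟨h1.1, h2.2.1, P.evord_trans h1.2.2 h2.2.2⟩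
  evord_total {x y} hx hy hxy := by
    rcases P.order_total (P.tgt_sub hx) (P.tgt_sub hy) hxy with h | h | h | h
    · exact absurd h (P.tgt_max hx)
    · exact absurd h (P.tgt_max hy)
    · exact Or.inl ⟨hx, hy, h⟩
    · exact Or.inr ⟨hy, hx, h⟩

/-- `f` is an isomorphism of ipomsets from `P` to `Q`. -/
structure IsIpoIso (P Q : Ipomset E A) (f : E → E) : Prop where
  maps : ∀ x ∈ P.events, f x ∈ Q.events
  inj : ∀ x ∈ P.events, ∀ y ∈ P.events, f x = f y → x = y
  surj : ∀ y ∈ Q.events, ∃ x ∈ P.events, f x = y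
  src_iff : ∀ x ∈ P.events, (x ∈ P.src ↔ f x ∈ Q.src)
  tgt_iff : ∀ x ∈ P.events, (x ∈ P.tgt ↔ f x ∈ Q.tgt)
  lab_eq : ∀ x ∈ P.events, Q.lab (f x) = P.lab x
  lt_iff : ∀ x ∈ P.events, ∀ y ∈ P.events, (Q.lt (f x) (f y) ↔ P.lt x y)
  evord_iff : ∀ x ∈ P.events, ∀ y ∈ P.events, ¬ P.lt x y → ¬ P.lt y x →
      (P.evord x y ↔ Q.evord (f x) (f y))

/-- `P ≅ Q`: there is an isomorphism of ipomsets from `P` to `Q`. -/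
def IpoIso (P Q : Ipomset E A) : Prop := ∃ f, IsIpoIso P Q f

/-- `f` is a subsumption of ipomsets from `P` to `Q`. -/
structure IsSubsumption (P Q : Ipomset E A) (f : E → E) : Prop where
  maps : ∀ x ∈ P.events, f x ∈ Q.events
  inj : ∀ x ∈ P.events, ∀ y ∈ P.events, f x = f y → x = y
  surj : ∀ y ∈ Q.events, ∃ x ∈ P.events, f x = y
  src_iff : ∀ x ∈ P.events, (x ∈ P.src ↔ f x ∈ Q.src)
  tgt_iff : ∀ x ∈ P.events, (x ∈ P.tgt ↔ f x ∈ Q.tgt)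
  lab_eq : ∀ x ∈ P.events, Q.lab (f x) = P.lab x
  lt_imp : ∀ x ∈ P.events, ∀ y ∈ P.events, Q.lt (f x) (f y) → P.lt x y
  evord_imp : ∀ x ∈ P.events, ∀ y ∈ P.events, ¬ P.lt x y → ¬ P.lt y x →
      P.evord x y → Q.evord (f x) (f y)

/-- `P ⊑ Q`: there is a subsumption from `P` to `Q`. -/
def Subsumes (P Q : Ipomset E A) : Prop := ∃ f, IsSubsumption P Q f

/-- `P ⊏ Q`: `P ⊑ Q` and `P` and `Q` are not isomorphic. -/
def StrictSubsumes (P Q : Ipomset E A) : Prop := Subsumes P Q ∧ ¬ IpoIso P Q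

/-- `f` is an isomorphism of conclists from `U` to `V`. -/
structure IsClIso (U V : Conclist E A) (f : E → E) : Prop where
  maps : ∀ x ∈ U.events, f x ∈ V.events
  inj : ∀ x ∈ U.events, ∀ y ∈ U.events, f x = f y → x = y
  surj : ∀ y ∈ V.events, ∃ x ∈ U.events, f x = y
  lab_eq : ∀ x ∈ U.events, V.lab (f x) = U.lab x
  evord_iff : ∀ x ∈ U.events, ∀ y ∈ U.events, (U.evord x y ↔ V.evord (f x) (f y))

/-- `U ≅ V` for conclists. -/
def ClIso (U V : Conclist E A) : Prop := ∃ f, IsClIso U V f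

/-- `P` and `Q` are composable representatives: the target interface of `P` coincides
with the source interface of `Q` and is exactly the overlap of the event sets. -/
def Composable [DecidableEq E] (P Q : Ipomset E A) : Prop :=
  P.tgtIface = Q.srcIface ∧ P.events ∩ Q.events = P.tgt

/-- One step of the glued precedence order. -/
def glueStep (P Q : Ipomset E A) (x y : E) : Prop :=
  P.lt x y ∨ Q.lt x y ∨
    (x ∈ P.events ∧ x ∉ P.tgt ∧ y ∈ Q.events ∧ y ∉ Q.src)

/-- The glued precedence order: transitive closure. -/
def glueLt (P Q : Ipomset E A) : E → E → Prop :=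
  Relation.TransGen (glueStep P Q)

/-- The glued event order: the union of the two event orders. -/
def glueEvord (P Q : Ipomset E A) (x y : E) : Prop :=
  P.evord x y ∨ Q.evord x y

/-- `R` is the gluing of the composable representatives `P` and `Q`. -/
def IsGlueOf [DecidableEq E] (P Q R : Ipomset E A) : Prop :=
  Composable P Q ∧
  R.events = P.events ∪ Q.events ∧
  (∀ x y, R.lt x y ↔ glueLt P Q x y) ∧
  (∀ x y, R.evord x y ↔ glueEvord P Q x y) ∧
  R.src = P.src ∧ R.tgt = Q.tgt ∧
  (∀ x ∈ P.events, R.lab x = P.lab x) ∧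
  (∀ x ∈ Q.events, R.lab x = Q.lab x)

/-- `R ≅ P * Q`: up to isomorphism, `R` is the gluing of `P` and `Q`. -/
def IsGluing [DecidableEq E] (P Q R : Ipomset E A) : Prop :=
  ∃ P' Q' R', IpoIso P P' ∧ IpoIso Q Q' ∧ IpoIso R R' ∧ IsGlueOf P' Q' R'

/-- A letter of a step sequence: a starter or a terminator. -/
def StepLetter (P : Ipomset E A) : Prop := P.Starter ∨ P.Terminator

/-- A word of starters and terminators is coherent if consecutive interfaces match
(as isomorphism classes of conclists). -/
def Coherent [DecidableEq E] (w : List (Ipomset E A)) : Prop :=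
  (∀ P ∈ w, StepLetter P) ∧
  w.Chain' (fun P Q => ClIso P.tgtIface Q.srcIface)

/-- The congruence `~` on coherent words: generated by composing two subsequent
starters or two subsequent terminators, removing/inserting identities, and
replacing letters by isomorphic ones. -/
inductive StepEquiv {E : Type u} {A : Type v} [DecidableEq E] :
    List (Ipomset E A) → List (Ipomset E A) → Prop
  | glue (u v : List (Ipomset E A)) (P Q R : Ipomset E A) :
      Coherent (u ++ P :: Q :: v) →
      ((P.Starter ∧ Q.Starter) ∨ (P.Terminator ∧ Q.Terminator)) →
      IsGluing P Q R →
      StepEquiv (u ++ P :: Q :: v) (u ++ R :: v)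
  | ident (u v : List (Ipomset E A)) (P : Ipomset E A) :
      Coherent (u ++ P :: v) → P.IsIdentity → u ++ v ≠ [] →
      StepEquiv (u ++ P :: v) (u ++ v)
  | iso (u v : List (Ipomset E A)) (P Q : Ipomset E A) :
      Coherent (u ++ P :: v) → IpoIso P Q →
      StepEquiv (u ++ P :: v) (u ++ Q :: v)
  | refl (w : List (Ipomset E A)) : StepEquiv w w
  | symm {w₁ w₂ : List (Ipomset E A)} : StepEquiv w₁ w₂ → StepEquiv w₂ w₁
  | trans {w₁ w₂ w₃ : List (Ipomset E A)} :
      StepEquiv w₁ w₂ → StepEquiv w₂ w₃ → StepEquiv w₁ w₃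

/-- `R` is (up to isomorphism) the gluing `P₁ * ⋯ * Pₙ` of the word `w = P₁ ⋯ Pₙ`. -/
inductive GlueWord {E : Type u} {A : Type v} [DecidableEq E] :
    List (Ipomset E A) → Ipomset E A → Prop
  | single (P : Ipomset E A) : GlueWord [P] P
  | cons (P : Ipomset E A) (w : List (Ipomset E A)) (R S : Ipomset E A) :
      GlueWord w R → IsGluing P R S → GlueWord (P :: w) S

/-- The discrete ipomset on sub-conclist `V` of the discrete ipomset `W`,
with sources `S` and targets `T`. -/
def letterOf [DecidableEq E] (W : Ipomset E A) (hW : W.Discrete)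
    (V S T : Finset E) : Ipomset E A where
  events := V ∩ W.events
  lt _ _ := False
  evord x y := x ∈ V ∩ W.events ∧ y ∈ V ∩ W.events ∧ W.evord x y
  src := S ∩ (V ∩ W.events)
  tgt := T ∩ (V ∩ W.events)
  lab := W.lab
  lt_mem h := h.elim
  evord_mem h := ⟨h.1, h.2.1⟩
  lt_irrefl _ h := h
  lt_trans h := h.elim
  evord_irrefl x h := W.evord_irrefl x h.2.2
  evord_trans h1 h2 := ⟨h1.1, h2.2.1, W.evord_trans h1.2.2 h2.2.2⟩
  order_total {x y} hx hy hxy := by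
    rcases W.order_total (Finset.mem_inter.mp hx).2 (Finset.mem_inter.mp hy).2 hxy
      with h | h | h | h
    · exact absurd h (hW _ _)
    · exact absurd h (hW _ _)
    · exact Or.inr (Or.inr (Or.inl ⟨hx, hy, h⟩))
    · exact Or.inr (Or.inr (Or.inr ⟨hy, hx, h⟩))
  src_sub := Finset.inter_subset_right
  tgt_sub := Finset.inter_subset_right
  src_min _ h := h
  tgt_max _ h := h

/-- `V↑B`: the starter on the conclist `V` (inside `W`) starting the events of `B`. -/
def upOn [DecidableEq E] (W : Ipomset E A) (hW : W.Discrete) (V B : Finset E) :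
    Ipomset E A :=
  letterOf W hW V (V \ B) V

/-- `V↓B`: the terminator on the conclist `V` (inside `W`) terminating the events of `B`. -/
def downOn [DecidableEq E] (W : Ipomset E A) (hW : W.Discrete) (V B : Finset E) :
    Ipomset E A :=
  letterOf W hW V V (V \ B)

/-- The transposition relation: `TranspAt w w'` holds iff `w' = τᵢ(w)` for some `i`. -/
inductive TranspAt {E : Type u} {A : Type v} [DecidableEq E] :
    List (Ipomset E A) → List (Ipomset E A) → Prop
  | ss (u v : List (Ipomset E A)) (W : Ipomset E A) (hW : W.Discrete)
      (Aa Bb : Finset E) (hA : Aa ⊆ W.events) (hB : Bb ⊆ W.events)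
      (hd : Disjoint Aa Bb) :
      TranspAt (u ++ upOn W hW (W.events \ Bb) Aa :: upOn W hW W.events Bb :: v)
               (u ++ upOn W hW (W.events \ Aa) Bb :: upOn W hW W.events Aa :: v)
  | tt (u v : List (Ipomset E A)) (W : Ipomset E A) (hW : W.Discrete)
      (Aa Bb : Finset E) (hA : Aa ⊆ W.events) (hB : Bb ⊆ W.events)
      (hd : Disjoint Aa Bb) :
      TranspAt (u ++ downOn W hW W.events Aa :: downOn W hW (W.events \ Aa) Bb :: v)
               (u ++ downOn W hW W.events Bb :: downOn W hW (W.events \ Bb) Aa :: v)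
  | st (u v : List (Ipomset E A)) (W : Ipomset E A) (hW : W.Discrete)
      (Aa Bb : Finset E) (hA : Aa ⊆ W.events) (hB : Bb ⊆ W.events)
      (hd : Disjoint Aa Bb) :
      TranspAt (u ++ upOn W hW W.events Aa :: downOn W hW W.events Bb :: v)
               (u ++ downOn W hW (W.events \ Aa) Bb :: upOn W hW (W.events \ Bb) Aa :: v)
  | ts (u v : List (Ipomset E A)) (W : Ipomset E A) (hW : W.Discrete)
      (Aa Bb : Finset E) (hA : Aa ⊆ W.events) (hB : Bb ⊆ W.events)
      (hd : Disjoint Aa Bb) :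
      TranspAt (u ++ downOn W hW (W.events \ Bb) Aa :: upOn W hW (W.events \ Aa) Bb :: v)
               (u ++ upOn W hW W.events Bb :: downOn W hW W.events Aa :: v)

/-- A word is dense if every letter starts or terminates exactly one event. -/
def DenseWord [DecidableEq E] (w : List (Ipomset E A)) : Prop :=
  ∀ P ∈ w, (P.Starter ∧ (P.events \ P.src).card = 1) ∨
    (P.Terminator ∧ (P.events \ P.tgt).card = 1)

/-- There is a chain of transpositions from `w₁` to `w₂` through dense coherent words
all satisfying `pred`. -/
def TranspChain [DecidableEq E] (pred : List (Ipomset E A) → Prop)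
    (w₁ w₂ : List (Ipomset E A)) : Prop :=
  ∃ us : List (List (Ipomset E A)),
    us.head? = some w₁ ∧ us.getLast? = some w₂ ∧
    us.Chain' TranspAt ∧ ∀ u ∈ us, DenseWord u ∧ Coherent u ∧ pred u

/-- A word is sparse if it is a single identity, or its letters are non-identity
starters and terminators which strictly alternate. -/
def SparseWord [DecidableEq E] (w : List (Ipomset E A)) : Prop :=
  (∃ P, w = [P] ∧ P.IsIdentity) ∨
  ((∀ P ∈ w, StepLetter P ∧ ¬ P.IsIdentity) ∧
    w.Chain' (fun P Q => (P.Starter ∧ Q.Terminator) ∨ (P.Terminator ∧ Q.Starter)))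

/-- `w` is THE sparse step decomposition of `P` (up to the chosen representatives). -/
def SparseDecomp [DecidableEq E] (P : Ipomset E A) (w : List (Ipomset E A)) : Prop :=
  SparseWord w ∧ Coherent w ∧ ∃ R, GlueWord w R ∧ IpoIso R P

/-- The transposition exchanging a starter followed by a terminator
(third case of the definition of transpositions): `TranspST w tw` iff `tw = τᵢ(w)`
where the `i`-th factor of `w` is `U↑A · U↓B`. -/
def TranspST [DecidableEq E] (w tw : List (Ipomset E A)) : Prop :=
  ∃ (u v : List (Ipomset E A)) (W : Ipomset E A) (hW : W.Discrete)
    (Aa Bb : Finset E), Aa ⊆ W.events ∧ Bb ⊆ W.events ∧ Disjoint Aa Bb ∧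
    w = u ++ upOn W hW W.events Aa :: downOn W hW W.events Bb :: v ∧
    tw = u ++ downOn W hW (W.events \ Aa) Bb :: upOn W hW (W.events \ Bb) Aa :: v

/-- `w₂ <ₑ w₁` on step sequences: some representative of `w₂` is obtained from a
representative of `w₁` by a starter-terminator transposition. -/
def LtE [DecidableEq E] (w₂ w₁ : List (Ipomset E A)) : Prop :=
  ∃ w₁' w₂', StepEquiv w₁ w₁' ∧ StepEquiv w₂ w₂' ∧ TranspST w₁' w₂'

/-- `≤`: the reflexive-transitive closure of `<ₑ` on step sequences. -/
def StepLe [DecidableEq E] (w₁ w₂ : List (Ipomset E A)) : Prop :=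
  Relation.ReflTransGen (fun x y => LtE x y ∨ StepEquiv x y) w₁ w₂

/-- A higher-dimensional automaton: cells labelled by conclists (identity ipomsets),
face maps satisfying the precubical identities, start and accept cells. -/
structure HDA (X : Type w) (E : Type u) (A : Type v) [DecidableEq E] where
  ev : X → Ipomset E A
  ev_id : ∀ q, (ev q).IsIdentity
  face : Bool → Finset E → X → X
  face_ev : ∀ (b : Bool) (B : Finset E) (q : X), B ⊆ (ev q).events →
    ev (face b B q) =
      letterOf (ev q) (ev_id q).1 ((ev q).events \ B) ((ev q).events \ B)
        ((ev q).events \ B)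
  face_comm : ∀ (b c : Bool) (B C : Finset E) (q : X), Disjoint B C →
    B ⊆ (ev q).events → C ⊆ (ev q).events →
    face b B (face c C q) = face c C (face b B q)
  start : Set X
  accept : Set X

/-- Paths in an HDA, together with their event words (interleaving identities). -/
inductive HPath {X : Type w} {E : Type u} {A : Type v} [DecidableEq E]
    (H : HDA X E A) : X → X → List (Ipomset E A) → Prop
  | nil (q : X) : HPath H q q [H.ev q]
  | up (q p r : X) (w : List (Ipomset E A)) (B : Finset E)
      (hB : B ⊆ (H.ev p).events) :
      q = H.face false B p → HPath H p r w →
      HPath H q r (upOn (H.ev p) (H.ev_id p).1 (H.ev p).events B :: w)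
  | down (p q r : X) (w : List (Ipomset E A)) (B : Finset E)
      (hB : B ⊆ (H.ev p).events) :
      q = H.face true B p → HPath H q r w →
      HPath H p r (downOn (H.ev p) (H.ev_id p).1 (H.ev p).events B :: w)

/-- The language of an HDA: event ipomsets of accepting paths, closed under iso. -/
def HLang {X : Type w} [DecidableEq E] (H : HDA X E A) : Set (Ipomset E A) :=
  {P | ∃ q r w R, q ∈ H.start ∧ r ∈ H.accept ∧ HPath H q r w ∧
    GlueWord w R ∧ IpoIso R P}

/-- An ST-automaton: states labelled by conclists (identity ipomsets), edges labelled
by starters and terminators consistently with the state labels. -/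
structure STAut (Q : Type w) (E : Type u) (A : Type v) [DecidableEq E] where
  lab : Q → Ipomset E A
  lab_id : ∀ q, (lab q).IsIdentity
  edge : Q → Ipomset E A → Q → Prop
  edge_st : ∀ {q P r}, edge q P r → StepLetter P
  edge_src : ∀ {q P r}, edge q P r → P.srcIface = (lab q).srcIface
  edge_tgt : ∀ {q P r}, edge q P r → P.tgtIface = (lab r).srcIface
  start : Set Q
  accept : Set Q

/-- Paths in an ST-automaton together with their labels
`id_{λ(q₀)} P₁ id_{λ(q₁)} ⋯ Pₙ id_{λ(qₙ)}`. -/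
inductive STPath {Q : Type w} {E : Type u} {A : Type v} [DecidableEq E]
    (S : STAut Q E A) : Q → Q → List (Ipomset E A) → Prop
  | nil (q : Q) : STPath S q q [S.lab q]
  | cons (q p r : Q) (P : Ipomset E A) (w : List (Ipomset E A)) :
      S.edge q P p → STPath S p r w → STPath S q r (S.lab q :: P :: w)

/-- The language of an ST-automaton: the `~`-classes of labels of accepting paths
(as a `~`-saturated set of words). -/
def STLang {Q : Type w} [DecidableEq E] (S : STAut Q E A) :
    Set (List (Ipomset E A)) :=
  {w | ∃ q r w', q ∈ S.start ∧ r ∈ S.accept ∧ STPath S q r w' ∧ StepEquiv w w'}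

/-- `S` is the ST-automaton `ST(X)` associated to the HDA `H`. -/
def IsSTof {X : Type w} [DecidableEq E] (H : HDA X E A) (S : STAut X E A) : Prop :=
  S.lab = H.ev ∧ S.start = H.start ∧ S.accept = H.accept ∧
  ∀ q P r, S.edge q P r ↔
    ((∃ B, ∃ _ : B ⊆ (H.ev r).events, q = H.face false B r ∧
        P = upOn (H.ev r) (H.ev_id r).1 (H.ev r).events B) ∨
     (∃ B, ∃ _ : B ⊆ (H.ev q).events, r = H.face true B q ∧
        P = downOn (H.ev q) (H.ev_id q).1 (H.ev q).events B))

/-- The image of a set of ipomsets under `Φ` (sparse step decomposition),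
as a `~`-saturated set of words. -/
def PhiImage [DecidableEq E] (L : Set (Ipomset E A)) : Set (List (Ipomset E A)) :=
  {w | ∃ P ∈ L, ∃ w', SparseDecomp P w' ∧ StepEquiv w w'}

/-- The image of a set of words under `Ψ` (gluing), as an iso-saturated set of ipomsets. -/
def PsiImage [DecidableEq E] (L : Set (List (Ipomset E A))) : Set (Ipomset E A) :=
  {P | ∃ w ∈ L, ∃ R, GlueWord w R ∧ IpoIso R P}

/-- `H` together with `ι` realizes the HDA `HD(S)` obtained from the ST-automaton `S`:
cells of `S` embed via `ι` compatibly with labels, start/accept cells, and each edge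
of `S` is realized by a face map of `H`. -/
def SimulatesST {Q : Type w} {X : Type w} [DecidableEq E]
    (S : STAut Q E A) (H : HDA X E A) (ι : Q → X) : Prop :=
  (∀ q, H.ev (ι q) = S.lab q) ∧
  (∀ q ∈ S.start, ι q ∈ H.start) ∧
  (∀ q ∈ S.accept, ι q ∈ H.accept) ∧
  ∀ q P r, S.edge q P r →
    ((∃ B, ∃ _ : B ⊆ (H.ev (ι r)).events, ι q = H.face false B (ι r) ∧
        P = upOn (H.ev (ι r)) (H.ev_id (ι r)).1 (H.ev (ι r)).events B) ∨
     (∃ B, ∃ _ : B ⊆ (H.ev (ι q)).events, ι r = H.face true B (ι q) ∧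
        P = downOn (H.ev (ι q)) (H.ev_id (ι q)).1 (H.ev (ι q)).events B))


/-! ### Auxiliary development -/

set_option linter.unusedSectionVars false
set_option linter.unusedVariables false

section Aux
variable {E : Type u} {A : Type v} [DecidableEq E]
open Relation

lemma Conclist.ext' {U V : Conclist E A} (hev : U.events = V.events)
    (ho : U.evord = V.evord) (hl : U.lab = V.lab) : U = V := by
  cases U; cases V
  dsimp at hev ho hl
  subst hev; subst ho; subst hl; rfl

lemma Composable.tgt_src {P Q : Ipomset E A} (h : Composable P Q) : P.tgt = Q.src :=
  congrArg Conclist.events h.1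

lemma mem_tgt_of_mem_both {P Q : Ipomset E A} (h : Composable P Q) {x : E}
    (hp : x ∈ P.events) (hq : x ∈ Q.events) : x ∈ P.tgt := by
  rw [← h.2]; exact Finset.mem_inter.mpr ⟨hp, hq⟩

lemma Composable.evord_iface {P Q : Ipomset E A} (h : Composable P Q) {x y : E}
    (hx : x ∈ P.tgt) (hy : y ∈ P.tgt) : P.evord x y ↔ Q.evord x y := by
  have h2 := congrFun (congrFun (congrArg Conclist.evord h.1) x) y
  simp only [Ipomset.tgtIface, Ipomset.srcIface] at h2
  constructor
  · intro he
    exact (h2 ▸ (⟨hx, hy, he⟩ : x ∈ P.tgt ∧ y ∈ P.tgt ∧ P.evord x y)).2.2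
  · intro he
    have hx' : x ∈ Q.src := h.tgt_src ▸ hx
    have hy' : y ∈ Q.src := h.tgt_src ▸ hy
    exact (h2.symm ▸ (⟨hx', hy', he⟩ : x ∈ Q.src ∧ y ∈ Q.src ∧ Q.evord x y)).2.2

lemma Composable.lab_iface {P Q : Ipomset E A} (h : Composable P Q) {x : E}
    (hx : x ∈ P.tgt) : P.lab x = Q.lab x := by
  have h2 := congrFun (congrArg Conclist.lab h.1) x
  simp only [Ipomset.tgtIface, Ipomset.srcIface] at h2
  rw [if_pos hx, if_pos (h.tgt_src ▸ hx : x ∈ Q.src)] at h2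
  exact Option.some.inj h2

section Glue
variable {P Q : Ipomset E A}

lemma glueStep_mem {x y : E} (h : glueStep P Q x y) :
    (x ∈ P.events ∨ x ∈ Q.events) ∧ (y ∈ P.events ∨ y ∈ Q.events) := by
  rcases h with h | h | ⟨h1, _, h3, _⟩
  · exact ⟨Or.inl (P.lt_mem h).1, Or.inl (P.lt_mem h).2⟩
  · exact ⟨Or.inr (Q.lt_mem h).1, Or.inr (Q.lt_mem h).2⟩
  · exact ⟨Or.inl h1, Or.inr h3⟩

lemma glueLt_mem {x y : E} (h : glueLt P Q x y) :
    (x ∈ P.events ∨ x ∈ Q.events) ∧ (y ∈ P.events ∨ y ∈ Q.events) := by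
  induction h with
  | single h => exact glueStep_mem h
  | tail _ h ih => exact ⟨ih.1, (glueStep_mem h).2⟩

lemma glueStep_of_bad (hc : Composable P Q) {x y : E}
    (hx : x ∈ Q.events) (hx' : x ∉ Q.src) (h : glueStep P Q x y) :
    Q.lt x y ∧ y ∈ Q.events ∧ y ∉ Q.src := by
  have hxnp : x ∉ P.events := fun hp => hx' (hc.tgt_src ▸ mem_tgt_of_mem_both hc hp hx)
  rcases h with h | h | ⟨h1, _, _, _⟩
  · exact absurd (P.lt_mem h).1 hxnp
  · exact ⟨h, (Q.lt_mem h).2, fun hs => Q.src_min hs h⟩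
  · exact absurd h1 hxnp

lemma glueLt_of_bad (hc : Composable P Q) {x y : E} (h : glueLt P Q x y) :
    x ∈ Q.events → x ∉ Q.src → Q.lt x y ∧ y ∈ Q.events ∧ y ∉ Q.src := by
  induction h using Relation.TransGen.head_induction_on with
  | single h => exact fun hx hx' => glueStep_of_bad hc hx hx' h
  | head h' h ihp =>
      intro hx hx'
      obtain ⟨hlt, hm, hns⟩ := glueStep_of_bad hc hx hx' h'
      obtain ⟨hlt2, hm2, hns2⟩ := ihp hm hns
      exact ⟨Q.lt_trans hlt hlt2, hm2, hns2⟩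

lemma glueStep_last (hc : Composable P Q) {x y : E} (h : glueStep P Q x y)
    (hy : y ∉ Q.events ∨ y ∈ Q.src) : P.lt x y := by
  rcases h with h | h | ⟨_, _, h3, h4⟩
  · exact h
  · rcases hy with hy | hy
    · exact absurd (Q.lt_mem h).2 hy
    · exact absurd h (Q.src_min hy)
  · tauto

lemma good_of_mem_P (hc : Composable P Q) {y : E} (hy : y ∈ P.events) :
    y ∉ Q.events ∨ y ∈ Q.src := by
  by_cases hq : y ∈ Q.events
  · exact Or.inr (hc.tgt_src ▸ mem_tgt_of_mem_both hc hy hq)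
  · exact Or.inl hq

lemma glueLt_last (hc : Composable P Q) {x y : E} (h : glueLt P Q x y)
    (hy : y ∉ Q.events ∨ y ∈ Q.src) : P.lt x y := by
  induction h with
  | single h => exact glueStep_last hc h hy
  | tail hab hbc ih =>
      have hPlt := glueStep_last hc hbc hy
      exact P.lt_trans (ih (good_of_mem_P hc (P.lt_mem hPlt).1)) hPlt

lemma glueLt_confine_P (hc : Composable P Q) {x y : E} (h : glueLt P Q x y)
    (hy : y ∈ P.events) : P.lt x y :=
  glueLt_last hc h (good_of_mem_P hc hy)

lemma glueLt_confine_Q (hc : Composable P Q) {x y : E} (h : glueLt P Q x y)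
    (hx : x ∈ Q.events) : Q.lt x y := by
  by_cases hxs : x ∈ Q.src
  · have hxt : x ∈ P.tgt := hc.tgt_src ▸ hxs
    obtain ⟨b, h1, h2⟩ := Relation.TransGen.head'_iff.mp h
    have hQ1 : Q.lt x b := by
      rcases h1 with h1 | h1 | ⟨_, hnt, _, _⟩
      · exact absurd h1 (P.tgt_max hxt)
      · exact h1
      · exact absurd hxt hnt
    rcases Relation.reflTransGen_iff_eq_or_transGen.mp h2 with h2 | h2
    · exact h2 ▸ hQ1
    · have hbQ : b ∈ Q.events := (Q.lt_mem hQ1).2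
      have hbs : b ∉ Q.src := fun hs => Q.src_min hs hQ1
      exact Q.lt_trans hQ1 (glueLt_of_bad hc h2 hbQ hbs).1
  · exact (glueLt_of_bad hc h hx hxs).1

lemma glueLt_irrefl' (hc : Composable P Q) {x : E} : ¬ glueLt P Q x x := by
  intro h
  rcases (glueLt_mem h).1 with hx | hx
  · exact P.lt_irrefl x (glueLt_confine_P hc h hx)
  · exact Q.lt_irrefl x (glueLt_confine_Q hc h hx)

lemma glueLt_src_min (hc : Composable P Q) {x y : E} (hx : x ∈ P.src) :
    ¬ glueLt P Q y x :=
  fun h => P.src_min hx (glueLt_confine_P hc h (P.src_sub hx))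

lemma glueLt_tgt_max (hc : Composable P Q) {x y : E} (hx : x ∈ Q.tgt) :
    ¬ glueLt P Q x y :=
  fun h => Q.tgt_max hx (glueLt_confine_Q hc h (Q.tgt_sub hx))

lemma glue_total (hc : Composable P Q) {x y : E}
    (hx : x ∈ P.events ∨ x ∈ Q.events) (hy : y ∈ P.events ∨ y ∈ Q.events) (hxy : x ≠ y) :
    glueLt P Q x y ∨ glueLt P Q y x ∨ glueEvord P Q x y ∨ glueEvord P Q y x := by
  have cross : ∀ a b : E, a ∈ P.events → a ∉ Q.events → b ∈ Q.events → b ∉ P.events →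
      glueStep P Q a b := by
    intro a b ha ha' hb hb'
    refine Or.inr (Or.inr ⟨ha, fun ht => ha' (Q.src_sub (hc.tgt_src ▸ ht)), hb,
      fun hs => hb' (P.tgt_sub (hc.tgt_src ▸ hs))⟩)
  rcases hx with hx | hx <;> rcases hy with hy | hy
  · rcases P.order_total hx hy hxy with h | h | h | h
    · exact Or.inl (TransGen.single (Or.inl h))
    · exact Or.inr (Or.inl (TransGen.single (Or.inl h)))
    · exact Or.inr (Or.inr (Or.inl (Or.inl h)))
    · exact Or.inr (Or.inr (Or.inr (Or.inl h)))
  · by_cases hxq : x ∈ Q.events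
    · rcases Q.order_total hxq hy hxy with h | h | h | h
      · exact Or.inl (TransGen.single (Or.inr (Or.inl h)))
      · exact Or.inr (Or.inl (TransGen.single (Or.inr (Or.inl h))))
      · exact Or.inr (Or.inr (Or.inl (Or.inr h)))
      · exact Or.inr (Or.inr (Or.inr (Or.inr h)))
    · by_cases hyp : y ∈ P.events
      · rcases P.order_total hx hyp hxy with h | h | h | h
        · exact Or.inl (TransGen.single (Or.inl h))
        · exact Or.inr (Or.inl (TransGen.single (Or.inl h)))
        · exact Or.inr (Or.inr (Or.inl (Or.inl h)))
        · exact Or.inr (Or.inr (Or.inr (Or.inl h)))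
      · exact Or.inl (TransGen.single (cross x y hx hxq hy hyp))
  · by_cases hyq : y ∈ Q.events
    · rcases Q.order_total hx hyq hxy with h | h | h | h
      · exact Or.inl (TransGen.single (Or.inr (Or.inl h)))
      · exact Or.inr (Or.inl (TransGen.single (Or.inr (Or.inl h))))
      · exact Or.inr (Or.inr (Or.inl (Or.inr h)))
      · exact Or.inr (Or.inr (Or.inr (Or.inr h)))
    · by_cases hxp : x ∈ P.events
      · rcases P.order_total hxp hy hxy with h | h | h | h
        · exact Or.inl (TransGen.single (Or.inl h))
        · exact Or.inr (Or.inl (TransGen.single (Or.inl h)))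
        · exact Or.inr (Or.inr (Or.inl (Or.inl h)))
        · exact Or.inr (Or.inr (Or.inr (Or.inl h)))
      · exact Or.inr (Or.inl (TransGen.single (cross y x hy hyq hx hxp)))
  · rcases Q.order_total hx hy hxy with h | h | h | h
    · exact Or.inl (TransGen.single (Or.inr (Or.inl h)))
    · exact Or.inr (Or.inl (TransGen.single (Or.inr (Or.inl h))))
    · exact Or.inr (Or.inr (Or.inl (Or.inr h)))
    · exact Or.inr (Or.inr (Or.inr (Or.inr h)))

/-- Explicit gluing of a composable pair, given transitivity of the joint event order. -/
def glueOf (P Q : Ipomset E A) (hc : Composable P Q)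
    (htr : ∀ {x y z : E}, glueEvord P Q x y → glueEvord P Q y z → glueEvord P Q x z) :
    Ipomset E A where
  events := P.events ∪ Q.events
  lt := glueLt P Q
  evord := glueEvord P Q
  src := P.src
  tgt := Q.tgt
  lab x := if x ∈ P.events then P.lab x else Q.lab x
  lt_mem h := by
    have := glueLt_mem h
    simp only [Finset.mem_union]
    exact this
  evord_mem h := by
    simp only [Finset.mem_union]
    rcases h with h | h
    · exact ⟨Or.inl (P.evord_mem h).1, Or.inl (P.evord_mem h).2⟩
    · exact ⟨Or.inr (Q.evord_mem h).1, Or.inr (Q.evord_mem h).2⟩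
  lt_irrefl x := glueLt_irrefl' hc
  lt_trans := TransGen.trans
  evord_irrefl x h := by
    rcases h with h | h
    exacts [P.evord_irrefl x h, Q.evord_irrefl x h]
  evord_trans := htr
  order_total {x y} hx hy hxy := by
    simp only [Finset.mem_union] at hx hy
    exact glue_total hc hx hy hxy
  src_sub := P.src_sub.trans Finset.subset_union_left
  tgt_sub := Q.tgt_sub.trans Finset.subset_union_right
  src_min hx := glueLt_src_min hc hx
  tgt_max hx := glueLt_tgt_max hc hx

lemma isGlueOf_glueOf (hc : Composable P Q)
    (htr : ∀ {x y z : E}, glueEvord P Q x y → glueEvord P Q y z → glueEvord P Q x z) :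
    IsGlueOf P Q (glueOf P Q hc htr) := by
  refine ⟨hc, rfl, fun _ _ => Iff.rfl, fun _ _ => Iff.rfl, rfl, rfl, ?_, ?_⟩
  · intro x hx; simp only [glueOf, if_pos hx]
  · intro x hx
    simp only [glueOf]
    split
    · next hp => exact hc.lab_iface (mem_tgt_of_mem_both hc hp hx)
    · rfl

end Glue


section Iso
variable {P Q R : Ipomset E A} {f g : E → E}

lemma IpoIso.refl (P : Ipomset E A) : IpoIso P P :=
  ⟨id, ⟨fun x hx => hx, fun x _ y _ h => h, fun y hy => ⟨y, hy, rfl⟩,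
    fun _ _ => Iff.rfl, fun _ _ => Iff.rfl, fun _ _ => rfl,
    fun _ _ _ _ => Iff.rfl, fun _ _ _ _ _ _ => Iff.rfl⟩⟩

lemma IsIpoIso.events_image (hf : IsIpoIso P Q f) : Q.events = P.events.image f := by
  ext y
  simp only [Finset.mem_image]
  constructor
  · intro hy; obtain ⟨x, hx, he⟩ := hf.surj y hy; exact ⟨x, hx, he⟩
  · rintro ⟨x, hx, rfl⟩; exact hf.maps x hx

lemma IsIpoIso.src_image (hf : IsIpoIso P Q f) : Q.src = P.src.image f := by
  ext y
  simp only [Finset.mem_image]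
  constructor
  · intro hy
    obtain ⟨x, hx, he⟩ := hf.surj y (Q.src_sub hy)
    exact ⟨x, (hf.src_iff x hx).mpr (he ▸ hy), he⟩
  · rintro ⟨x, hx, rfl⟩
    exact (hf.src_iff x (P.src_sub hx)).mp hx

lemma IsIpoIso.tgt_image (hf : IsIpoIso P Q f) : Q.tgt = P.tgt.image f := by
  ext y
  simp only [Finset.mem_image]
  constructor
  · intro hy
    obtain ⟨x, hx, he⟩ := hf.surj y (Q.tgt_sub hy)
    exact ⟨x, (hf.tgt_iff x hx).mpr (he ▸ hy), he⟩
  · rintro ⟨x, hx, rfl⟩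
    exact (hf.tgt_iff x (P.tgt_sub hx)).mp hx

/-- Upgrade an isomorphism to a two-sided function. -/
lemma IsIpoIso.inv (hf : IsIpoIso P Q f) :
    ∃ g : E → E, IsIpoIso Q P g ∧ (∀ x ∈ P.events, g (f x) = x) ∧
      (∀ y ∈ Q.events, f (g y) = y) := by
  classical
  have surj := hf.surj
  choose gg hg1 hg2 using surj
  refine ⟨fun y => if h : y ∈ Q.events then gg y h else y, ⟨?_, ?_, ?_, ?_, ?_, ?_, ?_, ?_⟩,
    ?_, ?_⟩
  · intro y hy; rw [dif_pos hy]; exact hg1 y hy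
  · intro y hy y' hy' h
    rw [dif_pos hy, dif_pos hy'] at h
    rw [← hg2 y hy, ← hg2 y' hy', h]
  · intro x hx
    refine ⟨f x, hf.maps x hx, ?_⟩
    rw [dif_pos (hf.maps x hx)]
    exact hf.inj _ (hg1 _ (hf.maps x hx)) x hx (hg2 _ (hf.maps x hx))
  · intro y hy
    rw [dif_pos hy]
    have := hf.src_iff (gg y hy) (hg1 y hy)
    rw [hg2 y hy] at this
    exact this.symm
  · intro y hy
    rw [dif_pos hy]
    have := hf.tgt_iff (gg y hy) (hg1 y hy)
    rw [hg2 y hy] at this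
    exact this.symm
  · intro y hy
    rw [dif_pos hy]
    have := hf.lab_eq (gg y hy) (hg1 y hy)
    rw [hg2 y hy] at this
    exact this.symm
  · intro y hy y' hy'
    rw [dif_pos hy, dif_pos hy']
    have := hf.lt_iff (gg y hy) (hg1 y hy) (gg y' hy') (hg1 y' hy')
    rw [hg2 y hy, hg2 y' hy'] at this
    exact this.symm
  · intro y hy y' hy' h1 h2
    rw [dif_pos hy, dif_pos hy']
    have hlt := hf.lt_iff (gg y hy) (hg1 y hy) (gg y' hy') (hg1 y' hy')
    have hlt' := hf.lt_iff (gg y' hy') (hg1 y' hy') (gg y hy) (hg1 y hy)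
    rw [hg2 y hy, hg2 y' hy'] at hlt
    rw [hg2 y hy, hg2 y' hy'] at hlt'
    have := hf.evord_iff (gg y hy) (hg1 y hy) (gg y' hy') (hg1 y' hy')
      (fun hl => h1 (hlt.mpr hl)) (fun hl => h2 (hlt'.mpr hl))
    rw [hg2 y hy, hg2 y' hy'] at this
    exact this.symm
  · intro x hx
    show (if h : f x ∈ Q.events then gg (f x) h else f x) = x
    rw [dif_pos (hf.maps x hx)]
    exact hf.inj _ (hg1 _ (hf.maps x hx)) x hx (hg2 _ (hf.maps x hx))
  · intro y hy
    show f (if h : y ∈ Q.events then gg y h else y) = y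
    rw [dif_pos hy]
    exact hg2 y hy

lemma IpoIso.symm (h : IpoIso P Q) : IpoIso Q P := by
  obtain ⟨f, hf⟩ := h
  obtain ⟨g, hg, _, _⟩ := hf.inv
  exact ⟨g, hg⟩

lemma IsIpoIso.trans {g : E → E} (hf : IsIpoIso P Q f) (hg : IsIpoIso Q R g) :
    IsIpoIso P R (g ∘ f) := by
  refine ⟨?_, ?_, ?_, ?_, ?_, ?_, ?_, ?_⟩
  · intro x hx; exact hg.maps _ (hf.maps x hx)
  · intro x hx y hy h
    exact hf.inj x hx y hy (hg.inj _ (hf.maps x hx) _ (hf.maps y hy) h)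
  · intro z hz
    obtain ⟨y, hy, rfl⟩ := hg.surj z hz
    obtain ⟨x, hx, rfl⟩ := hf.surj y hy
    exact ⟨x, hx, rfl⟩
  · intro x hx; exact (hf.src_iff x hx).trans (hg.src_iff _ (hf.maps x hx))
  · intro x hx; exact (hf.tgt_iff x hx).trans (hg.tgt_iff _ (hf.maps x hx))
  · intro x hx; exact (hg.lab_eq _ (hf.maps x hx)).trans (hf.lab_eq x hx)
  · intro x hx y hy
    exact (hg.lt_iff _ (hf.maps x hx) _ (hf.maps y hy)).trans (hf.lt_iff x hx y hy)
  · intro x hx y hy h1 h2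
    have e1 := hf.evord_iff x hx y hy h1 h2
    have e2 := hg.evord_iff _ (hf.maps x hx) _ (hf.maps y hy)
      (fun hl => h1 ((hf.lt_iff x hx y hy).mp hl))
      (fun hl => h2 ((hf.lt_iff y hy x hx).mp hl))
    exact e1.trans e2

lemma IpoIso.trans (h1 : IpoIso P Q) (h2 : IpoIso Q R) : IpoIso P R := by
  obtain ⟨f, hf⟩ := h1; obtain ⟨g, hg⟩ := h2
  exact ⟨g ∘ f, hf.trans hg⟩

lemma IpoIso.discrete (h : IpoIso P Q) (hd : P.Discrete) : Q.Discrete := by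
  obtain ⟨f, hf⟩ := h
  intro u v hl
  obtain ⟨x, hx, rfl⟩ := hf.surj u (Q.lt_mem hl).1
  obtain ⟨y, hy, rfl⟩ := hf.surj v (Q.lt_mem hl).2
  exact hd x y ((hf.lt_iff x hx y hy).mp hl)

lemma IpoIso.isIdentity (h : IpoIso P Q) (hd : P.IsIdentity) : Q.IsIdentity := by
  obtain ⟨f, hf⟩ := h
  refine ⟨IpoIso.discrete ⟨f, hf⟩ hd.1, ?_, ?_⟩
  · apply Finset.Subset.antisymm Q.src_sub
    intro y hy
    obtain ⟨x, hx, rfl⟩ := hf.surj y hy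
    exact (hf.src_iff x hx).mp (hd.2.1 ▸ hx)
  · apply Finset.Subset.antisymm Q.tgt_sub
    intro y hy
    obtain ⟨x, hx, rfl⟩ := hf.surj y hy
    exact (hf.tgt_iff x hx).mp (hd.2.2 ▸ hx)

/-- Sharp ipomsets: the event order only relates precedence-incomparable events. -/
def Sharp (P : Ipomset E A) : Prop := ∀ ⦃x y⦄, P.evord x y → ¬ P.lt x y ∧ ¬ P.lt y x

lemma Sharp.of_discrete (hd : P.Discrete) : Sharp P := fun x y _ => ⟨hd x y, hd y x⟩

lemma IsIpoIso.evord_iff' (hf : IsIpoIso P Q f) (hP : Sharp P) (hQ : Sharp Q)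
    {x y : E} (hx : x ∈ P.events) (hy : y ∈ P.events) :
    P.evord x y ↔ Q.evord (f x) (f y) := by
  constructor
  · intro he
    exact (hf.evord_iff x hx y hy (hP he).1 (hP he).2).mp he
  · intro he
    have h1 : ¬ P.lt x y := fun hl => (hQ he).1 ((hf.lt_iff x hx y hy).mpr hl)
    have h2 : ¬ P.lt y x := fun hl => (hQ he).2 ((hf.lt_iff y hy x hx).mpr hl)
    exact (hf.evord_iff x hx y hy h1 h2).mpr he

end Iso

section ClIsoStuff
variable {P Q : Ipomset E A} {U V W : Conclist E A}

lemma ClIso.refl (U : Conclist E A) : ClIso U U :=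
  ⟨id, ⟨fun x hx => hx, fun x _ y _ h => h, fun y hy => ⟨y, hy, rfl⟩,
    fun _ _ => rfl, fun _ _ _ _ => Iff.rfl⟩⟩

lemma ClIso.symm (h : ClIso U V) : ClIso V U := by
  classical
  obtain ⟨f, hf⟩ := h
  choose gg hg1 hg2 using hf.surj
  refine ⟨fun y => if h : y ∈ V.events then gg y h else y, ?_, ?_, ?_, ?_, ?_⟩
  · intro y hy; rw [dif_pos hy]; exact hg1 y hy
  · intro y hy y' hy' h
    rw [dif_pos hy, dif_pos hy'] at h
    rw [← hg2 y hy, ← hg2 y' hy', h]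
  · intro x hx
    refine ⟨f x, hf.maps x hx, ?_⟩
    rw [dif_pos (hf.maps x hx)]
    exact hf.inj _ (hg1 _ (hf.maps x hx)) x hx (hg2 _ (hf.maps x hx))
  · intro y hy
    rw [dif_pos hy]
    have := hf.lab_eq (gg y hy) (hg1 y hy)
    rw [hg2 y hy] at this
    exact this.symm
  · intro y hy y' hy'
    rw [dif_pos hy, dif_pos hy']
    have := hf.evord_iff (gg y hy) (hg1 y hy) (gg y' hy') (hg1 y' hy')
    rw [hg2 y hy, hg2 y' hy'] at this
    exact this.symm

lemma ClIso.trans (h1 : ClIso U V) (h2 : ClIso V W) : ClIso U W := by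
  obtain ⟨f, hf⟩ := h1; obtain ⟨g, hg⟩ := h2
  refine ⟨g ∘ f, ?_, ?_, ?_, ?_, ?_⟩
  · intro x hx; exact hg.maps _ (hf.maps x hx)
  · intro x hx y hy h
    exact hf.inj x hx y hy (hg.inj _ (hf.maps x hx) _ (hf.maps y hy) h)
  · intro z hz
    obtain ⟨y, hy, rfl⟩ := hg.surj z hz
    obtain ⟨x, hx, rfl⟩ := hf.surj y hy
    exact ⟨x, hx, rfl⟩
  · intro x hx; exact (hg.lab_eq _ (hf.maps x hx)).trans (hf.lab_eq x hx)
  · intro x hx y hy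
    exact (hf.evord_iff x hx y hy).trans (hg.evord_iff _ (hf.maps x hx) _ (hf.maps y hy))

lemma clIso_of_eq (h : U = V) : ClIso U V := h ▸ ClIso.refl U

lemma IpoIso.clIso_src (h : IpoIso P Q) : ClIso P.srcIface Q.srcIface := by
  obtain ⟨f, hf⟩ := h
  refine ⟨f, ?_, ?_, ?_, ?_, ?_⟩
  · intro x hx
    exact (hf.src_iff x (P.src_sub hx)).mp hx
  · intro x hx y hy h
    exact hf.inj x (P.src_sub hx) y (P.src_sub hy) h
  · intro y hy
    obtain ⟨x, hx, rfl⟩ := hf.surj y (Q.src_sub hy)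
    exact ⟨x, (hf.src_iff x hx).mpr hy, rfl⟩
  · intro x hx
    have hx0 : x ∈ P.src := hx
    show (if f x ∈ Q.src then some (Q.lab (f x)) else none) =
      (if x ∈ P.src then some (P.lab x) else none)
    rw [if_pos hx0, if_pos ((hf.src_iff x (P.src_sub hx0)).mp hx0),
      hf.lab_eq x (P.src_sub hx0)]
  · intro x hx y hy
    show (x ∈ P.src ∧ y ∈ P.src ∧ P.evord x y) ↔
      (f x ∈ Q.src ∧ f y ∈ Q.src ∧ Q.evord (f x) (f y))
    have hx' : x ∈ P.events := P.src_sub hx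
    have hy' : y ∈ P.events := P.src_sub hy
    have he := hf.evord_iff x hx' y hy' (P.src_min hy) (P.src_min hx)
    constructor
    · rintro ⟨h1, h2, h3⟩
      exact ⟨(hf.src_iff x hx').mp h1, (hf.src_iff y hy').mp h2, he.mp h3⟩
    · rintro ⟨h1, h2, h3⟩
      exact ⟨(hf.src_iff x hx').mpr h1, (hf.src_iff y hy').mpr h2, he.mpr h3⟩

lemma IpoIso.clIso_tgt (h : IpoIso P Q) : ClIso P.tgtIface Q.tgtIface := by
  obtain ⟨f, hf⟩ := h
  refine ⟨f, ?_, ?_, ?_, ?_, ?_⟩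
  · intro x hx
    exact (hf.tgt_iff x (P.tgt_sub hx)).mp hx
  · intro x hx y hy h
    exact hf.inj x (P.tgt_sub hx) y (P.tgt_sub hy) h
  · intro y hy
    obtain ⟨x, hx, rfl⟩ := hf.surj y (Q.tgt_sub hy)
    exact ⟨x, (hf.tgt_iff x hx).mpr hy, rfl⟩
  · intro x hx
    have hx0 : x ∈ P.tgt := hx
    show (if f x ∈ Q.tgt then some (Q.lab (f x)) else none) =
      (if x ∈ P.tgt then some (P.lab x) else none)
    rw [if_pos hx0, if_pos ((hf.tgt_iff x (P.tgt_sub hx0)).mp hx0),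
      hf.lab_eq x (P.tgt_sub hx0)]
  · intro x hx y hy
    show (x ∈ P.tgt ∧ y ∈ P.tgt ∧ P.evord x y) ↔
      (f x ∈ Q.tgt ∧ f y ∈ Q.tgt ∧ Q.evord (f x) (f y))
    have hx' : x ∈ P.events := P.tgt_sub hx
    have hy' : y ∈ P.events := P.tgt_sub hy
    have he := hf.evord_iff x hx' y hy' (P.tgt_max hx) (P.tgt_max hy)
    constructor
    · rintro ⟨h1, h2, h3⟩
      exact ⟨(hf.tgt_iff x hx').mp h1, (hf.tgt_iff y hy').mp h2, he.mp h3⟩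
    · rintro ⟨h1, h2, h3⟩
      exact ⟨(hf.tgt_iff x hx').mpr h1, (hf.tgt_iff y hy').mpr h2, he.mpr h3⟩

/-- Two identity ipomsets with isomorphic source interfaces are isomorphic. -/
lemma ident_iso_of_clIso (hP : P.IsIdentity) (hQ : Q.IsIdentity)
    (h : ClIso P.srcIface Q.srcIface) : IpoIso P Q := by
  obtain ⟨f, hf⟩ := h
  have hPs : P.src = P.events := hP.2.1
  have hQs : Q.src = Q.events := hQ.2.1
  have hPt : P.tgt = P.events := hP.2.2
  have hQt : Q.tgt = Q.events := hQ.2.2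
  have pmem : ∀ {x : E}, x ∈ P.events → x ∈ P.srcIface.events := by
    intro x h; show x ∈ P.src; rw [hPs]; exact h
  have qmem : ∀ {x : E}, x ∈ Q.events → x ∈ Q.srcIface.events := by
    intro x h; show x ∈ Q.src; rw [hQs]; exact h
  have fmem : ∀ {x : E}, x ∈ P.events → f x ∈ Q.events :=
    fun h => Q.src_sub (hf.maps _ (pmem h))
  refine ⟨f, ?_, ?_, ?_, ?_, ?_, ?_, ?_, ?_⟩
  · intro x hx; exact fmem hx
  · intro x hx y hy h; exact hf.inj x (pmem hx) y (pmem hy) h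
  · intro y hy
    obtain ⟨x, hx, rfl⟩ := hf.surj y (qmem hy)
    exact ⟨x, P.src_sub hx, rfl⟩
  · intro x hx
    rw [hPs, hQs]
    exact ⟨fun _ => fmem hx, fun _ => hx⟩
  · intro x hx
    rw [hPt, hQt]
    exact ⟨fun _ => fmem hx, fun _ => hx⟩
  · intro x hx
    have := hf.lab_eq x (pmem hx)
    rw [show P.srcIface.lab x = some (P.lab x) from if_pos (show x ∈ P.src from pmem hx),
      show Q.srcIface.lab (f x) = some (Q.lab (f x)) from
        if_pos (show f x ∈ Q.src from hf.maps x (pmem hx))] at this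
    exact Option.some.inj this
  · intro x hx y hy
    constructor
    · intro h; exact absurd h (hQ.1 _ _)
    · intro h; exact absurd h (hP.1 _ _)
  · intro x hx y hy _ _
    have heq := hf.evord_iff x (pmem hx) y (pmem hy)
    have heq' : (x ∈ P.src ∧ y ∈ P.src ∧ P.evord x y) ↔
        (f x ∈ Q.src ∧ f y ∈ Q.src ∧ Q.evord (f x) (f y)) := heq
    constructor
    · intro he
      exact (heq'.mp ⟨pmem hx, pmem hy, he⟩).2.2
    · intro he
      exact (heq'.mpr ⟨hf.maps x (pmem hx), hf.maps y (pmem hy), he⟩).2.2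

end ClIsoStuff


section Rigid

/-- Rigidity: order isomorphisms between finite strict total orders are unique. -/
lemma order_iso_unique {s t : Finset E} {r r' : E → E → Prop}
    (htr' : ∀ {a b c}, r' a b → r' b c → r' a c)
    (hir' : ∀ a, ¬ r' a a)
    (htot' : ∀ a ∈ t, ∀ b ∈ t, a ≠ b → r' a b ∨ r' b a)
    {f g : E → E}
    (hfm : ∀ x ∈ s, f x ∈ t) (hfi : ∀ x ∈ s, ∀ y ∈ s, f x = f y → x = y)
    (hfs : ∀ y ∈ t, ∃ x ∈ s, f x = y)
    (hfo : ∀ x ∈ s, ∀ y ∈ s, (r x y ↔ r' (f x) (f y)))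
    (hgm : ∀ x ∈ s, g x ∈ t) (hgi : ∀ x ∈ s, ∀ y ∈ s, g x = g y → x = y)
    (hgs : ∀ y ∈ t, ∃ x ∈ s, g x = y)
    (hgo : ∀ x ∈ s, ∀ y ∈ s, (r x y ↔ r' (g x) (g y))) :
    ∀ x ∈ s, f x = g x := by
  classical
  have keyrank : ∀ (h : E → E), (∀ x ∈ s, h x ∈ t) → (∀ x ∈ s, ∀ y ∈ s, h x = h y → x = y) →
      (∀ y ∈ t, ∃ x ∈ s, h x = y) → (∀ x ∈ s, ∀ y ∈ s, (r x y ↔ r' (h x) (h y))) →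
      ∀ x ∈ s, (t.filter (fun z => r' z (h x))).card = (s.filter (fun z => r z x)).card := by
    intro h hm hi hs' ho x hx
    symm
    apply Finset.card_bij (fun a _ => h a)
    · intro a ha
      simp only [Finset.mem_filter] at ha ⊢
      exact ⟨hm a ha.1, (ho a ha.1 x hx).mp ha.2⟩
    · intro a ha b hb hab
      simp only [Finset.mem_filter] at ha hb
      exact hi a ha.1 b hb.1 hab
    · intro b hb
      simp only [Finset.mem_filter] at hb
      obtain ⟨a, ha, rfl⟩ := hs' b hb.1
      exact ⟨a, Finset.mem_filter.mpr ⟨ha, (ho a ha x hx).mpr hb.2⟩, rfl⟩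
  have rmono : ∀ u ∈ t, ∀ v ∈ t, r' u v →
      (t.filter (fun z => r' z u)).card < (t.filter (fun z => r' z v)).card := by
    intro u hu v hv huv
    apply Finset.card_lt_card
    rw [Finset.ssubset_iff_of_subset]
    · exact ⟨u, Finset.mem_filter.mpr ⟨hu, huv⟩, fun hmem =>
        hir' u (Finset.mem_filter.mp hmem).2⟩
    · intro z hz
      simp only [Finset.mem_filter] at hz ⊢
      exact ⟨hz.1, htr' hz.2 huv⟩
  intro x hx
  by_contra hne
  have h1 := keyrank f hfm hfi hfs hfo x hx
  have h2 := keyrank g hgm hgi hgs hgo x hx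
  rcases htot' (f x) (hfm x hx) (g x) (hgm x hx) hne with h | h
  · exact absurd (h1.trans h2.symm) (Nat.ne_of_lt (rmono _ (hfm x hx) _ (hgm x hx) h))
  · exact absurd (h2.trans h1.symm) (Nat.ne_of_lt (rmono _ (hgm x hx) _ (hfm x hx) h))

end Rigid

section Congr
variable {P Q R P' Q' R' : Ipomset E A} {f g h : E → E}

lemma IsIpoIso.congr (hf : IsIpoIso P Q f) (he : ∀ x ∈ P.events, f x = g x) :
    IsIpoIso P Q g := by
  refine ⟨?_, ?_, ?_, ?_, ?_, ?_, ?_, ?_⟩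
  · intro x hx; rw [← he x hx]; exact hf.maps x hx
  · intro x hx y hy hxy; exact hf.inj x hx y hy (by rw [he x hx, he y hy]; exact hxy)
  · intro y hy; obtain ⟨x, hx, rfl⟩ := hf.surj y hy; exact ⟨x, hx, (he x hx).symm⟩
  · intro x hx; rw [← he x hx]; exact hf.src_iff x hx
  · intro x hx; rw [← he x hx]; exact hf.tgt_iff x hx
  · intro x hx; rw [← he x hx]; exact hf.lab_eq x hx
  · intro x hx y hy; rw [← he x hx, ← he y hy]; exact hf.lt_iff x hx y hy
  · intro x hx y hy h1 h2; rw [← he x hx, ← he y hy]; exact hf.evord_iff x hx y hy h1 h2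

lemma glueLt_congr (hc : Composable P Q) (hc' : Composable P' Q')
    (hP : IsIpoIso P P' h) (hQ : IsIpoIso Q Q' h) :
    ∀ {x y : E}, (x ∈ P.events ∨ x ∈ Q.events) → (y ∈ P.events ∨ y ∈ Q.events) →
      (glueLt P Q x y ↔ glueLt P' Q' (h x) (h y)) := by
  -- pulled membership: if h a lands in P' but a ∈ Q \ P, contradiction
  have memP : ∀ {a : E}, (a ∈ P.events ∨ a ∈ Q.events) → h a ∈ P'.events → a ∈ P.events := by
    intro a ha hm
    rcases ha with ha | ha
    · exact ha
    · have h1 : h a ∈ Q'.events := hQ.maps a ha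
      have h2 : h a ∈ P'.tgt := mem_tgt_of_mem_both hc' hm h1
      have h3 : a ∈ Q.src := (hQ.src_iff a ha).mpr (hc'.tgt_src ▸ h2)
      exact P.tgt_sub (hc.tgt_src ▸ h3)
  have memQ : ∀ {a : E}, (a ∈ P.events ∨ a ∈ Q.events) → h a ∈ Q'.events → a ∈ Q.events := by
    intro a ha hm
    rcases ha with ha | ha
    · have h1 : h a ∈ P'.events := hP.maps a ha
      have h2 : h a ∈ P'.tgt := mem_tgt_of_mem_both hc' h1 hm
      have h3 : a ∈ P.tgt := (hP.tgt_iff a ha).mpr h2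
      exact Q.src_sub (hc.tgt_src ▸ h3)
    · exact ha
  have stepmap : ∀ {a b : E}, glueStep P Q a b → glueStep P' Q' (h a) (h b) := by
    rintro a b (hab | hab | ⟨h1, h2, h3, h4⟩)
    · exact Or.inl ((hP.lt_iff _ (P.lt_mem hab).1 _ (P.lt_mem hab).2).mpr hab)
    · exact Or.inr (Or.inl ((hQ.lt_iff _ (Q.lt_mem hab).1 _ (Q.lt_mem hab).2).mpr hab))
    · exact Or.inr (Or.inr ⟨hP.maps a h1, fun ht => h2 ((hP.tgt_iff a h1).mpr ht),
        hQ.maps b h3, fun hs => h4 ((hQ.src_iff b h3).mpr hs)⟩)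
  have pull : ∀ {a b : E}, (a ∈ P.events ∨ a ∈ Q.events) → (b ∈ P.events ∨ b ∈ Q.events) →
      glueStep P' Q' (h a) (h b) → glueStep P Q a b := by
    rintro a b ha hb (hab | hab | ⟨h1, h2, h3, h4⟩)
    · have ha' := memP ha (P'.lt_mem hab).1
      have hb' := memP hb (P'.lt_mem hab).2
      exact Or.inl ((hP.lt_iff a ha' b hb').mp hab)
    · have ha' := memQ ha (Q'.lt_mem hab).1
      have hb' := memQ hb (Q'.lt_mem hab).2
      exact Or.inr (Or.inl ((hQ.lt_iff a ha' b hb').mp hab))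
    · have ha' := memP ha h1
      have hb' := memQ hb h3
      exact Or.inr (Or.inr ⟨ha', fun ht => h2 ((hP.tgt_iff a ha').mp ht), hb',
        fun hs => h4 ((hQ.src_iff b hb').mp hs)⟩)
  intro x y hx hy
  constructor
  · intro hl
    clear hx hy
    induction hl with
    | single s => exact Relation.TransGen.single (stepmap s)
    | tail _ s ih => exact Relation.TransGen.tail ih (stepmap s)
  · intro hl
    have bwd : ∀ {u v : E}, glueLt P' Q' u v → ∀ {a b : E},
        (a ∈ P.events ∨ a ∈ Q.events) → (b ∈ P.events ∨ b ∈ Q.events) →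
        h a = u → h b = v → glueLt P Q a b := by
      intro u v huv
      induction huv with
      | single s =>
          intro a b ha hb ea eb
          exact Relation.TransGen.single (pull ha hb (by rw [ea, eb]; exact s))
      | tail h1 s ih =>
          intro a b ha hb ea eb
          rcases (glueStep_mem s).1 with hm | hm
          · obtain ⟨c, hc1, hc2⟩ := hP.surj _ hm
            exact Relation.TransGen.tail (ih ha (Or.inl hc1) ea hc2)
              (pull (Or.inl hc1) hb (by rw [hc2, eb]; exact s))
          · obtain ⟨c, hc1, hc2⟩ := hQ.surj _ hm
            exact Relation.TransGen.tail (ih ha (Or.inr hc1) ea hc2)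
              (pull (Or.inr hc1) hb (by rw [hc2, eb]; exact s))
    exact bwd hl hx hy rfl rfl

/-- The key congruence: gluings of isomorphic composable pairs are isomorphic. -/
lemma glue_core (hg : IsGlueOf P Q R) (hg' : IsGlueOf P' Q' R')
    (hiP : IpoIso P P') (hiQ : IpoIso Q Q') : IpoIso R R' := by
  classical
  obtain ⟨hc, hev, hlt, hevord, hsrc, htgt, hlabP, hlabQ⟩ := hg
  obtain ⟨hc', hev', hlt', hevord', hsrc', htgt', hlabP', hlabQ'⟩ := hg'
  obtain ⟨f, hf⟩ := hiP
  obtain ⟨g, hgg⟩ := hiQ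
  -- f and g agree on the interface P.tgt = Q.src
  have hag : ∀ x ∈ P.tgt, f x = g x := by
    apply order_iso_unique (r := P.evord) (r' := P'.evord) (s := P.tgt) (t := P'.tgt)
    · exact fun hab hbc => P'.evord_trans hab hbc
    · exact P'.evord_irrefl
    · intro a ha b hb hne
      rcases P'.order_total (P'.tgt_sub ha) (P'.tgt_sub hb) hne with h | h | h | h
      · exact absurd h (P'.tgt_max ha)
      · exact absurd h (P'.tgt_max hb)
      · exact Or.inl h
      · exact Or.inr h
    · exact fun x hx => (hf.tgt_iff x (P.tgt_sub hx)).mp hx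
    · exact fun x hx y hy => hf.inj x (P.tgt_sub hx) y (P.tgt_sub hy)
    · intro y hy
      obtain ⟨x, hx, rfl⟩ := hf.surj y (P'.tgt_sub hy)
      exact ⟨x, (hf.tgt_iff x hx).mpr hy, rfl⟩
    · intro x hx y hy
      exact hf.evord_iff x (P.tgt_sub hx) y (P.tgt_sub hy) (P.tgt_max hx) (P.tgt_max hy)
    · intro x hx
      have hxs : x ∈ Q.src := hc.tgt_src ▸ hx
      have h1 : g x ∈ Q'.src := (hgg.src_iff x (Q.src_sub hxs)).mp hxs
      rw [hc'.tgt_src]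
      exact h1
    · intro x hx y hy
      exact hgg.inj x (Q.src_sub (hc.tgt_src ▸ hx)) y (Q.src_sub (hc.tgt_src ▸ hy))
    · intro y hy
      have hy' : y ∈ Q'.src := hc'.tgt_src ▸ hy
      obtain ⟨x, hx, rfl⟩ := hgg.surj y (Q'.src_sub hy')
      have : x ∈ Q.src := (hgg.src_iff x hx).mpr hy'
      exact ⟨x, hc.tgt_src ▸ this, rfl⟩
    · intro x hx y hy
      have hxs : x ∈ Q.src := hc.tgt_src ▸ hx
      have hys : y ∈ Q.src := hc.tgt_src ▸ hy
      have e1 : P.evord x y ↔ Q.evord x y := hc.evord_iface hx hy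
      have e2 : Q.evord x y ↔ Q'.evord (g x) (g y) :=
        hgg.evord_iff x (Q.src_sub hxs) y (Q.src_sub hys) (Q.src_min hys) (Q.src_min hxs)
      have hgx : g x ∈ P'.tgt := by
        rw [hc'.tgt_src]; exact (hgg.src_iff x (Q.src_sub hxs)).mp hxs
      have hgy : g y ∈ P'.tgt := by
        rw [hc'.tgt_src]; exact (hgg.src_iff y (Q.src_sub hys)).mp hys
      have e3 : P'.evord (g x) (g y) ↔ Q'.evord (g x) (g y) := hc'.evord_iface hgx hgy
      exact (e1.trans e2).trans e3.symm
  set hh : E → E := fun x => if x ∈ P.events then f x else g x with hhdef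
  have hhf : ∀ x ∈ P.events, hh x = f x := fun x hx => if_pos hx
  have hhg : ∀ x ∈ Q.events, hh x = g x := by
    intro x hx
    by_cases hp : x ∈ P.events
    · rw [show hh x = f x from if_pos hp]
      exact hag x (mem_tgt_of_mem_both hc hp hx)
    · exact if_neg hp
  have hf' : IsIpoIso P P' hh := hf.congr (fun x hx => (hhf x hx).symm)
  have hgq' : IsIpoIso Q Q' hh := hgg.congr (fun x hx => (hhg x hx).symm)
  have hR : ∀ {x : E}, x ∈ R.events ↔ (x ∈ P.events ∨ x ∈ Q.events) := by
    intro x; rw [hev]; exact Finset.mem_union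
  have hR' : ∀ {x : E}, x ∈ R'.events ↔ (x ∈ P'.events ∨ x ∈ Q'.events) := by
    intro x; rw [hev']; exact Finset.mem_union
  -- `hh` lands in `P'` only on `P`-events, etc.
  have hPP' : ∀ {x : E}, x ∈ R.events → hh x ∈ P'.events → x ∈ P.events := by
    intro x hx hm
    rcases hR.mp hx with h | h
    · exact h
    · have h1 : hh x ∈ Q'.events := hgq'.maps x h
      have h2 : hh x ∈ P'.tgt := mem_tgt_of_mem_both hc' hm h1
      have h3 : x ∈ Q.src := (hgq'.src_iff x h).mpr (hc'.tgt_src ▸ h2)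
      exact P.tgt_sub (hc.tgt_src ▸ h3)
  have hQQ' : ∀ {x : E}, x ∈ R.events → hh x ∈ Q'.events → x ∈ Q.events := by
    intro x hx hm
    rcases hR.mp hx with h | h
    · have h1 : hh x ∈ P'.events := hf'.maps x h
      have h2 : hh x ∈ P'.tgt := mem_tgt_of_mem_both hc' h1 hm
      have h3 : x ∈ P.tgt := (hf'.tgt_iff x h).mpr h2
      exact Q.src_sub (hc.tgt_src ▸ h3)
    · exact h
  refine ⟨hh, ?_, ?_, ?_, ?_, ?_, ?_, ?_, ?_⟩
  · intro x hx
    rcases hR.mp hx with h | h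
    · exact hR'.mpr (Or.inl (hf'.maps x h))
    · exact hR'.mpr (Or.inr (hgq'.maps x h))
  · intro x hx y hy hxy
    rcases hR.mp hx with h1 | h1 <;> rcases hR.mp hy with h2 | h2
    · exact hf'.inj x h1 y h2 hxy
    · have : y ∈ P.events := hPP' hy (hxy ▸ hf'.maps x h1)
      exact hf'.inj x h1 y this hxy
    · have : x ∈ P.events := hPP' hx (hxy.symm ▸ hf'.maps y h2)
      exact hf'.inj x this y h2 hxy
    · exact hgq'.inj x h1 y h2 hxy
  · intro y hy
    rcases hR'.mp hy with h | h
    · obtain ⟨x, hx, rfl⟩ := hf'.surj y h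
      exact ⟨x, hR.mpr (Or.inl hx), rfl⟩
    · obtain ⟨x, hx, rfl⟩ := hgq'.surj y h
      exact ⟨x, hR.mpr (Or.inr hx), rfl⟩
  · intro x hx
    rw [hsrc, hsrc']
    by_cases hp : x ∈ P.events
    · exact hf'.src_iff x hp
    · constructor
      · intro hs; exact absurd (P.src_sub hs) hp
      · intro hs
        have h1 : hh x ∈ P'.events := P'.src_sub hs
        exact absurd (hPP' hx h1) hp
  · intro x hx
    rw [htgt, htgt']
    rcases hR.mp hx with h | h
    · by_cases hq : x ∈ Q.events
      · exact hgq'.tgt_iff x hq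
      · constructor
        · intro ht; exact absurd (Q.tgt_sub ht) hq
        · intro ht
          have h1 : hh x ∈ Q'.events := Q'.tgt_sub ht
          exact absurd (hQQ' hx h1) hq
    · exact hgq'.tgt_iff x h
  · intro x hx
    rcases hR.mp hx with h | h
    · rw [hlabP' _ (hf'.maps x h), hf'.lab_eq x h, hlabP x h]
    · rw [hlabQ' _ (hgq'.maps x h), hgq'.lab_eq x h, hlabQ x h]
  · intro x hx y hy
    rw [show (R.lt x y) = (glueLt P Q x y) from propext (hlt x y),
      show (R'.lt (hh x) (hh y)) = (glueLt P' Q' (hh x) (hh y)) from propext (hlt' _ _)]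
    exact (glueLt_congr hc hc' hf' hgq' (hR.mp hx) (hR.mp hy)).symm
  · intro x hx y hy hn1 hn2
    have hlt1 : ∀ {a b : E}, P.lt a b → R.lt a b :=
      fun hab => (hlt _ _).mpr (Relation.TransGen.single (Or.inl hab))
    have hlt2 : ∀ {a b : E}, Q.lt a b → R.lt a b :=
      fun hab => (hlt _ _).mpr (Relation.TransGen.single (Or.inr (Or.inl hab)))
    constructor
    · intro he
      rcases (hevord x y).mp he with h1 | h1
      · have hx1 := (P.evord_mem h1).1
        have hy1 := (P.evord_mem h1).2
        have := (hf'.evord_iff x hx1 y hy1 (fun hl => hn1 (hlt1 hl))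
          (fun hl => hn2 (hlt1 hl))).mp h1
        exact (hevord' _ _).mpr (Or.inl this)
      · have hx1 := (Q.evord_mem h1).1
        have hy1 := (Q.evord_mem h1).2
        have := (hgq'.evord_iff x hx1 y hy1 (fun hl => hn1 (hlt2 hl))
          (fun hl => hn2 (hlt2 hl))).mp h1
        exact (hevord' _ _).mpr (Or.inr this)
    · intro he
      rcases (hevord' _ _).mp he with h1 | h1
      · have hx1 : x ∈ P.events := hPP' hx (P'.evord_mem h1).1
        have hy1 : y ∈ P.events := hPP' hy (P'.evord_mem h1).2
        exact (hevord x y).mpr (Or.inl ((hf'.evord_iff x hx1 y hy1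
          (fun hl => hn1 (hlt1 hl)) (fun hl => hn2 (hlt1 hl))).mpr h1))
      · have hx1 : x ∈ Q.events := hQQ' hx (Q'.evord_mem h1).1
        have hy1 : y ∈ Q.events := hQQ' hy (Q'.evord_mem h1).2
        exact (hevord x y).mpr (Or.inr ((hgq'.evord_iff x hx1 y hy1
          (fun hl => hn1 (hlt2 hl)) (fun hl => hn2 (hlt2 hl))).mpr h1))

end Congr


section GluingWord
variable {P Q R S X P' X' S' : Ipomset E A}

lemma IsGluing.congr' (h : IsGluing P X S) (hP : IpoIso P P') (hX : IpoIso X X')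
    (hS : IpoIso S S') : IsGluing P' X' S' := by
  obtain ⟨P₁, X₁, S₁, i1, i2, i3, hg⟩ := h
  exact ⟨P₁, X₁, S₁, hP.symm.trans i1, hX.symm.trans i2, hS.symm.trans i3, hg⟩

lemma IsGluing.unique' (h1 : IsGluing P X S) (h2 : IsGluing P X' S') (hX : IpoIso X X') :
    IpoIso S S' := by
  obtain ⟨P₁, X₁, S₁, i1, i2, i3, hg⟩ := h1
  obtain ⟨P₂, X₂, S₂, j1, j2, j3, hg'⟩ := h2
  have hS12 : IpoIso S₁ S₂ :=
    glue_core hg hg' (i1.symm.trans j1) (i2.symm.trans (hX.trans j2))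
  exact i3.trans (hS12.trans j3.symm)

lemma glueWord_unique : ∀ {w : List (Ipomset E A)} {R R'},
    GlueWord w R → GlueWord w R' → IpoIso R R' := by
  intro w
  induction w with
  | nil => intro R R' h _; cases h
  | cons a l ih =>
    intro R R' h h'
    cases h with
    | single =>
      cases h' with
      | single => exact IpoIso.refl _
      | cons _ _ M _ hM _ => cases hM
    | cons _ _ M _ hM hg =>
      cases h' with
      | single => cases hM
      | cons _ _ M' _ hM' hg' => exact hg.unique' hg' (ih hM hM')

lemma glueWord_cons_inv : ∀ {w : List (Ipomset E A)} {R},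
    GlueWord w R → ∀ {a : Ipomset E A} {l}, w = a :: l → l ≠ [] →
    ∃ M, GlueWord l M ∧ IsGluing a M R := by
  intro w R h
  cases h with
  | single P =>
    intro a l he hl
    injection he with h1 h2
    exact absurd h2.symm hl
  | cons P w' M S hM hG =>
    intro a l he hl
    injection he with h1 h2
    subst h1; subst h2
    exact ⟨M, hM, hG⟩

lemma glueWord_singleton_inv {a R : Ipomset E A} (h : GlueWord [a] R) : R = a := by
  cases h with
  | single => rfl
  | cons _ _ M _ hM _ => cases hM

lemma prefix_transfer (u : List (Ipomset E A)) {w w' : List (Ipomset E A)} (hw : w ≠ [])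
    (H : ∀ S, GlueWord w S → ∃ S', GlueWord w' S' ∧ IpoIso S S') :
    ∀ R, GlueWord (u ++ w) R → ∃ R', GlueWord (u ++ w') R' ∧ IpoIso R R' := by
  induction u with
  | nil => exact H
  | cons a u ih =>
    intro R h
    rw [List.cons_append] at h
    have hne : u ++ w ≠ [] := fun he => hw (List.append_eq_nil_iff.mp he).2
    obtain ⟨M, hM, hg⟩ := glueWord_cons_inv h rfl hne
    obtain ⟨M', hM', hiso⟩ := ih M hM
    exact ⟨R, GlueWord.cons a _ M' R hM'
      (hg.congr' (IpoIso.refl a) hiso (IpoIso.refl R)), IpoIso.refl R⟩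

end GluingWord


section SharpStuff
variable {P Q R : Ipomset E A}

/-- Genuine event order: event order on precedence-incomparable pairs. -/
def GEv (P : Ipomset E A) (x y : E) : Prop := P.evord x y ∧ ¬ P.lt x y ∧ ¬ P.lt y x

/-- The genuine event order is transitive (an invariant of glue-generated ipomsets). -/
def EvInv (P : Ipomset E A) : Prop := ∀ {x y z : E}, GEv P x y → GEv P y z → GEv P x z

lemma evInv_of_discrete (hd : P.Discrete) : EvInv P :=
  fun h1 h2 => ⟨P.evord_trans h1.1 h2.1, hd _ _, hd _ _⟩

lemma EvInv.iso (hP : EvInv P) (h : IpoIso P Q) : EvInv Q := by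
  obtain ⟨f, hf⟩ := h
  intro x y z e1 e2
  obtain ⟨a, ha, rfl⟩ := hf.surj x (Q.evord_mem e1.1).1
  obtain ⟨b, hb, rfl⟩ := hf.surj y (Q.evord_mem e1.1).2
  obtain ⟨c, hc, rfl⟩ := hf.surj z (Q.evord_mem e2.1).2
  have n1 : ¬ P.lt a b := fun hl => e1.2.1 ((hf.lt_iff a ha b hb).mpr hl)
  have n1' : ¬ P.lt b a := fun hl => e1.2.2 ((hf.lt_iff b hb a ha).mpr hl)
  have n2 : ¬ P.lt b c := fun hl => e2.2.1 ((hf.lt_iff b hb c hc).mpr hl)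
  have n2' : ¬ P.lt c b := fun hl => e2.2.2 ((hf.lt_iff c hc b hb).mpr hl)
  have g1 : GEv P a b := ⟨(hf.evord_iff a ha b hb n1 n1').mpr e1.1, n1, n1'⟩
  have g2 : GEv P b c := ⟨(hf.evord_iff b hb c hc n2 n2').mpr e2.1, n2, n2'⟩
  have g3 := hP g1 g2
  refine ⟨(hf.evord_iff a ha c hc g3.2.1 g3.2.2).mp g3.1, ?_, ?_⟩
  · exact fun hl => g3.2.1 ((hf.lt_iff a ha c hc).mp hl)
  · exact fun hl => g3.2.2 ((hf.lt_iff c hc a ha).mp hl)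

lemma EvInv.glue (hg : IsGlueOf P Q R) (hP : EvInv P) (hQ : EvInv Q) : EvInv R := by
  obtain ⟨hc, hev, hlt, hevord, hsrc, htgt, hlabP, hlabQ⟩ := hg
  have hlt1 : ∀ {a b : E}, P.lt a b → R.lt a b :=
    fun hab => (hlt _ _).mpr (Relation.TransGen.single (Or.inl hab))
  have hlt2 : ∀ {a b : E}, Q.lt a b → R.lt a b :=
    fun hab => (hlt _ _).mpr (Relation.TransGen.single (Or.inr (Or.inl hab)))
  intro x y z e1 e2
  have he3 : R.evord x z := R.evord_trans e1.1 e2.1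
  refine ⟨he3, ?_, ?_⟩
  all_goals {
    intro hlxz
    rcases (hevord x z).mp he3 with h3 | h3
    · -- x, z ∈ P
      have hxP := (P.evord_mem h3).1
      have hzP := (P.evord_mem h3).2
      have hPlt : P.lt x z ∨ P.lt z x := by
        first
        | exact Or.inl (glueLt_confine_P hc ((hlt x z).mp hlxz) hzP)
        | exact Or.inr (glueLt_confine_P hc ((hlt z x).mp hlxz) hxP)
      by_cases hyP : y ∈ P.events
      · have g1 : GEv P x y := by
          refine ⟨?_, fun hl => e1.2.1 (hlt1 hl), fun hl => e1.2.2 (hlt1 hl)⟩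
          rcases (hevord x y).mp e1.1 with h | h
          · exact h
          · have hxi : x ∈ P.tgt := mem_tgt_of_mem_both hc hxP (Q.evord_mem h).1
            have hyi : y ∈ P.tgt := mem_tgt_of_mem_both hc hyP (Q.evord_mem h).2
            exact (hc.evord_iface hxi hyi).mpr h
        have g2 : GEv P y z := by
          refine ⟨?_, fun hl => e2.2.1 (hlt1 hl), fun hl => e2.2.2 (hlt1 hl)⟩
          rcases (hevord y z).mp e2.1 with h | h
          · exact h
          · have hyi : y ∈ P.tgt := mem_tgt_of_mem_both hc hyP (Q.evord_mem h).1
            have hzi : z ∈ P.tgt := mem_tgt_of_mem_both hc hzP (Q.evord_mem h).2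
            exact (hc.evord_iface hyi hzi).mpr h
        have g3 := hP g1 g2
        rcases hPlt with h | h
        exacts [g3.2.1 h, g3.2.2 h]
      · -- y ∉ P, so both chains go through Q, and x, z lie on the interface
        have hxQ : x ∈ Q.events := by
          rcases (hevord x y).mp e1.1 with h | h
          · exact absurd (P.evord_mem h).2 hyP
          · exact (Q.evord_mem h).1
        have hzQ : z ∈ Q.events := by
          rcases (hevord y z).mp e2.1 with h | h
          · exact absurd (P.evord_mem h).1 hyP
          · exact (Q.evord_mem h).2
        have hxi : x ∈ P.tgt := mem_tgt_of_mem_both hc hxP hxQ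
        have hzi : z ∈ P.tgt := mem_tgt_of_mem_both hc hzP hzQ
        rcases hPlt with h | h
        exacts [P.tgt_max hxi h, P.tgt_max hzi h]
    · -- x, z ∈ Q
      have hxQ := (Q.evord_mem h3).1
      have hzQ := (Q.evord_mem h3).2
      have hQlt : Q.lt x z ∨ Q.lt z x := by
        first
        | exact Or.inl (glueLt_confine_Q hc ((hlt x z).mp hlxz) hxQ)
        | exact Or.inr (glueLt_confine_Q hc ((hlt z x).mp hlxz) hzQ)
      by_cases hyQ : y ∈ Q.events
      · have g1 : GEv Q x y := by
          refine ⟨?_, fun hl => e1.2.1 (hlt2 hl), fun hl => e1.2.2 (hlt2 hl)⟩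
          rcases (hevord x y).mp e1.1 with h | h
          · have hxi : x ∈ P.tgt := mem_tgt_of_mem_both hc (P.evord_mem h).1 hxQ
            have hyi : y ∈ P.tgt := mem_tgt_of_mem_both hc (P.evord_mem h).2 hyQ
            exact (hc.evord_iface hxi hyi).mp h
          · exact h
        have g2 : GEv Q y z := by
          refine ⟨?_, fun hl => e2.2.1 (hlt2 hl), fun hl => e2.2.2 (hlt2 hl)⟩
          rcases (hevord y z).mp e2.1 with h | h
          · have hyi : y ∈ P.tgt := mem_tgt_of_mem_both hc (P.evord_mem h).1 hyQ
            have hzi : z ∈ P.tgt := mem_tgt_of_mem_both hc (P.evord_mem h).2 hzQ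
            exact (hc.evord_iface hyi hzi).mp h
          · exact h
        have g3 := hQ g1 g2
        rcases hQlt with h | h
        exacts [g3.2.1 h, g3.2.2 h]
      · have hxP : x ∈ P.events := by
          rcases (hevord x y).mp e1.1 with h | h
          · exact (P.evord_mem h).1
          · exact absurd (Q.evord_mem h).2 hyQ
        have hzP : z ∈ P.events := by
          rcases (hevord y z).mp e2.1 with h | h
          · exact (P.evord_mem h).2
          · exact absurd (Q.evord_mem h).1 hyQ
        have hxi : x ∈ Q.src := hc.tgt_src ▸ mem_tgt_of_mem_both hc hxP hxQ
        have hzi : z ∈ Q.src := hc.tgt_src ▸ mem_tgt_of_mem_both hc hzP hzQ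
        rcases hQlt with h | h
        exacts [Q.src_min hzi h, Q.src_min hxi h]
  }

/-- The sharpening of an ipomset: restrict the event order to genuine pairs. -/
def sharpen (P : Ipomset E A) (h : EvInv P) : Ipomset E A where
  events := P.events
  lt := P.lt
  evord := GEv P
  src := P.src
  tgt := P.tgt
  lab := P.lab
  lt_mem := P.lt_mem
  evord_mem h' := P.evord_mem h'.1
  lt_irrefl := P.lt_irrefl
  lt_trans := P.lt_trans
  evord_irrefl x h' := P.evord_irrefl x h'.1
  evord_trans := h
  order_total {x y} hx hy hne := by
    by_cases l1 : P.lt x y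
    · exact Or.inl l1
    by_cases l2 : P.lt y x
    · exact Or.inr (Or.inl l2)
    rcases P.order_total hx hy hne with h' | h' | h' | h'
    · exact absurd h' l1
    · exact absurd h' l2
    · exact Or.inr (Or.inr (Or.inl ⟨h', l1, l2⟩))
    · exact Or.inr (Or.inr (Or.inr ⟨h', l2, l1⟩))
  src_sub := P.src_sub
  tgt_sub := P.tgt_sub
  src_min := P.src_min
  tgt_max := P.tgt_max

lemma sharpen_sharp (h : EvInv P) : Sharp (sharpen P h) := fun _ _ he => he.2

lemma sharpen_iso (h : EvInv P) : IpoIso P (sharpen P h) := by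
  refine ⟨id, fun x hx => hx, fun x _ y _ h => h, fun y hy => ⟨y, hy, rfl⟩,
    fun _ _ => Iff.rfl, fun _ _ => Iff.rfl, fun _ _ => rfl,
    fun _ _ _ _ => Iff.rfl, ?_⟩
  intro x hx y hy n1 n2
  exact ⟨fun he => ⟨he, n1, n2⟩, fun he => he.1⟩

lemma glueStep_sharpen (hP : EvInv P) (hQ : EvInv Q) {x y : E} :
    glueStep (sharpen P hP) (sharpen Q hQ) x y ↔ glueStep P Q x y := Iff.rfl

lemma glueLt_sharpen (hP : EvInv P) (hQ : EvInv Q) {x y : E} :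
    glueLt (sharpen P hP) (sharpen Q hQ) x y ↔ glueLt P Q x y := Iff.rfl

lemma isGlueOf_sharpen (hg : IsGlueOf P Q R) (hP : EvInv P) (hQ : EvInv Q) (hR : EvInv R) :
    IsGlueOf (sharpen P hP) (sharpen Q hQ) (sharpen R hR) := by
  obtain ⟨hc, hev, hlt, hevord, hsrc, htgt, hlabP, hlabQ⟩ := hg
  have hlt1 : ∀ {a b : E}, P.lt a b → R.lt a b :=
    fun hab => (hlt _ _).mpr (Relation.TransGen.single (Or.inl hab))
  have hlt2 : ∀ {a b : E}, Q.lt a b → R.lt a b :=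
    fun hab => (hlt _ _).mpr (Relation.TransGen.single (Or.inr (Or.inl hab)))
  refine ⟨⟨?_, hc.2⟩, hev, hlt, ?_, hsrc, htgt, hlabP, hlabQ⟩
  · apply Conclist.ext'
    · exact hc.tgt_src
    · funext x y
      apply propext
      show (x ∈ P.tgt ∧ y ∈ P.tgt ∧ GEv P x y) ↔ (x ∈ Q.src ∧ y ∈ Q.src ∧ GEv Q x y)
      constructor
      · rintro ⟨hx, hy, he, _, _⟩
        exact ⟨hc.tgt_src ▸ hx, hc.tgt_src ▸ hy,
          (hc.evord_iface hx hy).mp he,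
          Q.src_min (hc.tgt_src ▸ hy), Q.src_min (hc.tgt_src ▸ hx)⟩
      · rintro ⟨hx, hy, he, _, _⟩
        have hx' : x ∈ P.tgt := hc.tgt_src.symm ▸ hx
        have hy' : y ∈ P.tgt := hc.tgt_src.symm ▸ hy
        exact ⟨hx', hy', (hc.evord_iface hx' hy').mpr he,
          P.tgt_max hx', P.tgt_max hy'⟩
    · funext x
      show (if x ∈ P.tgt then some (P.lab x) else none) =
        (if x ∈ Q.src then some (Q.lab x) else none)
      by_cases hx : x ∈ P.tgt
      · rw [if_pos hx, if_pos (hc.tgt_src ▸ hx : x ∈ Q.src), hc.lab_iface hx]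
      · rw [if_neg hx, if_neg (show ¬ x ∈ Q.src from fun h => hx (hc.tgt_src.symm ▸ h))]
  · intro x y
    show GEv R x y ↔ GEv P x y ∨ GEv Q x y
    constructor
    · rintro ⟨he, n1, n2⟩
      rcases (hevord x y).mp he with h | h
      · exact Or.inl ⟨h, fun hl => n1 (hlt1 hl), fun hl => n2 (hlt1 hl)⟩
      · exact Or.inr ⟨h, fun hl => n1 (hlt2 hl), fun hl => n2 (hlt2 hl)⟩
    · rintro (⟨he, n1, n2⟩ | ⟨he, n1, n2⟩)
      · refine ⟨(hevord x y).mpr (Or.inl he), ?_, ?_⟩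
        · exact fun hl => n1 (glueLt_confine_P hc ((hlt x y).mp hl) (P.evord_mem he).2)
        · exact fun hl => n2 (glueLt_confine_P hc ((hlt y x).mp hl) (P.evord_mem he).1)
      · refine ⟨(hevord x y).mpr (Or.inr he), ?_, ?_⟩
        · exact fun hl => n1 (glueLt_confine_Q hc ((hlt x y).mp hl) (Q.evord_mem he).1)
        · exact fun hl => n2 (glueLt_confine_Q hc ((hlt y x).mp hl) (Q.evord_mem he).2)

lemma StepLetter.discrete' {P : Ipomset E A} (h : StepLetter P) : P.Discrete :=
  h.elim (·.1) (·.1)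

lemma glueWord_evInv : ∀ {w : List (Ipomset E A)} {R}, (∀ P ∈ w, StepLetter P) →
    GlueWord w R → EvInv R := by
  intro w
  induction w with
  | nil => intro R _ h; cases h
  | cons a l ih =>
    intro R hlet h
    cases h with
    | single => exact evInv_of_discrete (hlet a List.mem_cons_self).discrete'
    | cons _ _ M _ hM hg =>
      have hMinv : EvInv M := ih (fun P hP => hlet P (List.mem_cons_of_mem a hP)) hM
      obtain ⟨P₁, X₁, S₁, i1, i2, i3, hgo⟩ := hg
      have h1 : EvInv P₁ :=
        EvInv.iso (evInv_of_discrete (hlet a List.mem_cons_self).discrete') i1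
      have h2 : EvInv X₁ := EvInv.iso hMinv i2
      intro x y z
      exact EvInv.iso (EvInv.glue hgo h1 h2) i3.symm

end SharpStuff


section MapIpo
variable {P Q : Ipomset E A}

/-- Rename the events of an ipomset along an injective map. -/
def mapIpo (k : E → E) (P : Ipomset E A) (lab' : E → A)
    (hinj : ∀ a ∈ P.events, ∀ b ∈ P.events, k a = k b → a = b) : Ipomset E A where
  events := P.events.image k
  lt x y := ∃ a, a ∈ P.events ∧ ∃ b, b ∈ P.events ∧ k a = x ∧ k b = y ∧ P.lt a b
  evord x y := ∃ a, a ∈ P.events ∧ ∃ b, b ∈ P.events ∧ k a = x ∧ k b = y ∧ P.evord a b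
  src := P.src.image k
  tgt := P.tgt.image k
  lab := lab'
  lt_mem := by
    rintro x y ⟨a, ha, b, hb, rfl, rfl, h⟩
    exact ⟨Finset.mem_image_of_mem k ha, Finset.mem_image_of_mem k hb⟩
  evord_mem := by
    rintro x y ⟨a, ha, b, hb, rfl, rfl, h⟩
    exact ⟨Finset.mem_image_of_mem k ha, Finset.mem_image_of_mem k hb⟩
  lt_irrefl := by
    rintro x ⟨a, ha, b, hb, rfl, he, h⟩
    exact P.lt_irrefl a (hinj a ha b hb he.symm ▸ h)
  lt_trans := by
    rintro x y z ⟨a, ha, b, hb, rfl, rfl, h⟩ ⟨b', hb', c, hc, he, rfl, h'⟩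
    exact ⟨a, ha, c, hc, rfl, rfl, P.lt_trans h (hinj b' hb' b hb he ▸ h')⟩
  evord_irrefl := by
    rintro x ⟨a, ha, b, hb, rfl, he, h⟩
    exact P.evord_irrefl a (hinj a ha b hb he.symm ▸ h)
  evord_trans := by
    rintro x y z ⟨a, ha, b, hb, rfl, rfl, h⟩ ⟨b', hb', c, hc, he, rfl, h'⟩
    exact ⟨a, ha, c, hc, rfl, rfl, P.evord_trans h (hinj b' hb' b hb he ▸ h')⟩
  order_total := by
    intro x y hx hy hne
    obtain ⟨a, ha, rfl⟩ := Finset.mem_image.mp hx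
    obtain ⟨b, hb, rfl⟩ := Finset.mem_image.mp hy
    have hab : a ≠ b := fun h => hne (h ▸ rfl)
    rcases P.order_total ha hb hab with h | h | h | h
    · exact Or.inl ⟨a, ha, b, hb, rfl, rfl, h⟩
    · exact Or.inr (Or.inl ⟨b, hb, a, ha, rfl, rfl, h⟩)
    · exact Or.inr (Or.inr (Or.inl ⟨a, ha, b, hb, rfl, rfl, h⟩))
    · exact Or.inr (Or.inr (Or.inr ⟨b, hb, a, ha, rfl, rfl, h⟩))
  src_sub := Finset.image_subset_image P.src_sub
  tgt_sub := Finset.image_subset_image P.tgt_sub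
  src_min := by
    rintro x y hx ⟨c, hc, b, hb, rfl, he, h⟩
    obtain ⟨a, ha, rfl⟩ := Finset.mem_image.mp hx
    exact P.src_min ha (hinj b hb a (P.src_sub ha) he ▸ h)
  tgt_max := by
    rintro x y hx ⟨b, hb, c, hc, he, rfl, h⟩
    obtain ⟨a, ha, rfl⟩ := Finset.mem_image.mp hx
    exact P.tgt_max ha (hinj b hb a (P.tgt_sub ha) he ▸ h)

lemma isIpoIso_mapIpo {k : E → E} {lab' : E → A}
    {hinj : ∀ a ∈ P.events, ∀ b ∈ P.events, k a = k b → a = b}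
    (hlab : ∀ a ∈ P.events, lab' (k a) = P.lab a) :
    IsIpoIso P (mapIpo k P lab' hinj) k := by
  refine ⟨?_, hinj, ?_, ?_, ?_, ?_, ?_, ?_⟩
  · intro x hx; exact Finset.mem_image_of_mem k hx
  · intro y hy
    obtain ⟨a, ha, rfl⟩ := Finset.mem_image.mp hy
    exact ⟨a, ha, rfl⟩
  · intro x hx
    constructor
    · intro h; exact Finset.mem_image_of_mem k h
    · intro h
      obtain ⟨a, ha, he⟩ := Finset.mem_image.mp h
      exact hinj a (P.src_sub ha) x hx he ▸ ha
  · intro x hx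
    constructor
    · intro h; exact Finset.mem_image_of_mem k h
    · intro h
      obtain ⟨a, ha, he⟩ := Finset.mem_image.mp h
      exact hinj a (P.tgt_sub ha) x hx he ▸ ha
  · intro x hx; exact hlab x hx
  · intro x hx y hy
    constructor
    · rintro ⟨a, ha, b, hb, e1, e2, h⟩
      rw [hinj a ha x hx e1, hinj b hb y hy e2] at h
      exact h
    · intro h; exact ⟨x, hx, y, hy, rfl, rfl, h⟩
  · intro x hx y hy _ _
    constructor
    · intro h; exact ⟨x, hx, y, hy, rfl, rfl, h⟩
    · rintro ⟨a, ha, b, hb, e1, e2, h⟩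
      rw [hinj a ha x hx e1, hinj b hb y hy e2] at h
      exact h

lemma mapIpo_sharp {k : E → E} {lab' : E → A}
    {hinj : ∀ a ∈ P.events, ∀ b ∈ P.events, k a = k b → a = b}
    (hs : Sharp P) : Sharp (mapIpo k P lab' hinj) := by
  rintro x y ⟨a, ha, b, hb, rfl, rfl, he⟩
  constructor
  · rintro ⟨a', ha', b', hb', e1, e2, hl⟩
    rw [hinj a' ha' a ha e1, hinj b' hb' b hb e2] at hl
    exact (hs he).1 hl
  · rintro ⟨b', hb', a', ha', e2, e1, hl⟩
    rw [hinj a' ha' a ha e1, hinj b' hb' b hb e2] at hl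
    exact (hs he).2 hl

lemma composable_mapIpo {k : E → E} {lab' : E → A} (hc : Composable P Q)
    {hinjP : ∀ a ∈ P.events, ∀ b ∈ P.events, k a = k b → a = b}
    {hinjQ : ∀ a ∈ Q.events, ∀ b ∈ Q.events, k a = k b → a = b}
    (hinjPQ : ∀ a ∈ P.events, ∀ b ∈ Q.events, k a = k b → a = b) :
    Composable (mapIpo k P lab' hinjP) (mapIpo k Q lab' hinjQ) := by
  constructor
  · apply Conclist.ext'
    · show P.tgt.image k = Q.src.image k
      rw [hc.tgt_src]
    · funext x y
      apply propext
      show (x ∈ P.tgt.image k ∧ y ∈ P.tgt.image k ∧ _) ↔ (x ∈ Q.src.image k ∧ _ ∧ _)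
      constructor
      · rintro ⟨hx, hy, a', ha', b', hb', e1, e2, he⟩
        obtain ⟨a, ha, rfl⟩ := Finset.mem_image.mp hx
        obtain ⟨b, hb, rfl⟩ := Finset.mem_image.mp hy
        rw [hinjP a' ha' a (P.tgt_sub ha) e1, hinjP b' hb' b (P.tgt_sub hb) e2] at he
        have ha2 : a ∈ Q.src := hc.tgt_src ▸ ha
        have hb2 : b ∈ Q.src := hc.tgt_src ▸ hb
        exact ⟨Finset.mem_image_of_mem k ha2, Finset.mem_image_of_mem k hb2,
          a, Q.src_sub ha2, b, Q.src_sub hb2, rfl, rfl, (hc.evord_iface ha hb).mp he⟩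
      · rintro ⟨hx, hy, a', ha', b', hb', e1, e2, he⟩
        obtain ⟨a, ha, rfl⟩ := Finset.mem_image.mp hx
        obtain ⟨b, hb, rfl⟩ := Finset.mem_image.mp hy
        rw [hinjQ a' ha' a (Q.src_sub ha) e1, hinjQ b' hb' b (Q.src_sub hb) e2] at he
        have ha2 : a ∈ P.tgt := hc.tgt_src.symm ▸ ha
        have hb2 : b ∈ P.tgt := hc.tgt_src.symm ▸ hb
        exact ⟨Finset.mem_image_of_mem k ha2, Finset.mem_image_of_mem k hb2,
          a, P.tgt_sub ha2, b, P.tgt_sub hb2, rfl, rfl, (hc.evord_iface ha2 hb2).mpr he⟩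
    · funext x
      show (if x ∈ P.tgt.image k then some (lab' x) else none) =
        (if x ∈ Q.src.image k then some (lab' x) else none)
      rw [hc.tgt_src]
  · show P.events.image k ∩ Q.events.image k = P.tgt.image k
    ext x
    simp only [Finset.mem_inter, Finset.mem_image]
    constructor
    · rintro ⟨⟨a, ha, rfl⟩, ⟨b, hb, he⟩⟩
      have := hinjPQ a ha b hb he.symm
      exact ⟨a, mem_tgt_of_mem_both hc ha (this ▸ hb), rfl⟩
    · rintro ⟨a, ha, rfl⟩
      exact ⟨⟨a, P.tgt_sub ha, rfl⟩, ⟨a, Q.src_sub (hc.tgt_src ▸ ha), rfl⟩⟩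

end MapIpo

section Assoc
variable {P Q Z Y G : Ipomset E A}

/-- Joint one-step relation for a triple. -/
def s6 (P Q Z : Ipomset E A) (x y : E) : Prop :=
  P.lt x y ∨ Q.lt x y ∨ Z.lt x y ∨
    (x ∈ P.events ∧ x ∉ P.tgt ∧ y ∈ Q.events ∧ y ∉ Q.src) ∨
    (x ∈ Q.events ∧ x ∉ Q.tgt ∧ y ∈ Z.events ∧ y ∉ Z.src) ∨
    (x ∈ P.events ∧ x ∉ P.tgt ∧ y ∈ Z.events ∧ y ∉ Z.src)

lemma glueLt_assoc (hPQ : Composable P Q) (hQZ : Composable Q Z)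
    (hYev : Y.events = Q.events ∪ Z.events) (hYlt : ∀ x y, Y.lt x y ↔ glueLt Q Z x y)
    (hYsrc : Y.src = Q.src)
    (hGev : G.events = P.events ∪ Q.events) (hGlt : ∀ x y, G.lt x y ↔ glueLt P Q x y)
    (hGtgt : G.tgt = Q.tgt) :
    ∀ x y, glueLt P Y x y ↔ glueLt G Z x y := by
  have stepQZ : ∀ {a b : E}, glueStep Q Z a b → s6 P Q Z a b := by
    rintro a b (h | h | h)
    · exact Or.inr (Or.inl h)
    · exact Or.inr (Or.inr (Or.inl h))
    · exact Or.inr (Or.inr (Or.inr (Or.inr (Or.inl h))))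
  have stepPQ : ∀ {a b : E}, glueStep P Q a b → s6 P Q Z a b := by
    rintro a b (h | h | h)
    · exact Or.inl h
    · exact Or.inr (Or.inl h)
    · exact Or.inr (Or.inr (Or.inr (Or.inl h)))
  have stepPY : ∀ {a b : E}, glueStep P Y a b → Relation.TransGen (s6 P Q Z) a b := by
    rintro a b (h | h | ⟨h1, h2, h3, h4⟩)
    · exact Relation.TransGen.single (Or.inl h)
    · exact Relation.TransGen.mono (fun _ _ s => stepQZ s) _ _ ((hYlt a b).mp h)
    · rw [hYev] at h3
      rw [hYsrc] at h4
      by_cases hbq : b ∈ Q.events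
      · exact Relation.TransGen.single (Or.inr (Or.inr (Or.inr (Or.inl ⟨h1, h2, hbq, h4⟩))))
      · have h3' : b ∈ Z.events := by
          rcases Finset.mem_union.mp h3 with h | h
          · exact absurd h hbq
          · exact h
        have h5 : b ∉ Z.src := fun hs => hbq (Q.tgt_sub (hQZ.tgt_src.symm ▸ hs))
        exact Relation.TransGen.single
          (Or.inr (Or.inr (Or.inr (Or.inr (Or.inr ⟨h1, h2, h3', h5⟩)))))
  have s6PY : ∀ {a b : E}, s6 P Q Z a b → glueLt P Y a b := by
    rintro a b (h | h | h | ⟨h1, h2, h3, h4⟩ | h | ⟨h1, h2, h3, h4⟩)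
    · exact Relation.TransGen.single (Or.inl h)
    · exact Relation.TransGen.single (Or.inr (Or.inl
        ((hYlt a b).mpr (Relation.TransGen.single (Or.inl h)))))
    · exact Relation.TransGen.single (Or.inr (Or.inl
        ((hYlt a b).mpr (Relation.TransGen.single (Or.inr (Or.inl h))))))
    · refine Relation.TransGen.single (Or.inr (Or.inr ⟨h1, h2, ?_, ?_⟩))
      · rw [hYev]; exact Finset.mem_union_left _ h3
      · rw [hYsrc]; exact h4
    · exact Relation.TransGen.single (Or.inr (Or.inl
        ((hYlt a b).mpr (Relation.TransGen.single (Or.inr (Or.inr h))))))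
    · refine Relation.TransGen.single (Or.inr (Or.inr ⟨h1, h2, ?_, ?_⟩))
      · rw [hYev]; exact Finset.mem_union_right _ h3
      · rw [hYsrc]
        intro hs
        exact h4 (hQZ.tgt_src ▸ mem_tgt_of_mem_both hQZ (Q.src_sub hs) h3 : b ∈ Z.src)
  have stepGZ : ∀ {a b : E}, glueStep G Z a b → Relation.TransGen (s6 P Q Z) a b := by
    rintro a b (h | h | ⟨h1, h2, h3, h4⟩)
    · exact Relation.TransGen.mono (fun _ _ s => stepPQ s) _ _ ((hGlt a b).mp h)
    · exact Relation.TransGen.single (Or.inr (Or.inr (Or.inl h)))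
    · rw [hGev] at h1
      rw [hGtgt] at h2
      rcases Finset.mem_union.mp h1 with h1 | h1
      · by_cases hq : a ∈ Q.events
        · exact Relation.TransGen.single
            (Or.inr (Or.inr (Or.inr (Or.inr (Or.inl ⟨hq, h2, h3, h4⟩)))))
        · have h5 : a ∉ P.tgt := fun ht => hq (Q.src_sub (hPQ.tgt_src ▸ ht))
          exact Relation.TransGen.single
            (Or.inr (Or.inr (Or.inr (Or.inr (Or.inr ⟨h1, h5, h3, h4⟩)))))
      · exact Relation.TransGen.single
          (Or.inr (Or.inr (Or.inr (Or.inr (Or.inl ⟨h1, h2, h3, h4⟩)))))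
  have s6GZ : ∀ {a b : E}, s6 P Q Z a b → glueLt G Z a b := by
    rintro a b (h | h | h | h | ⟨h1, h2, h3, h4⟩ | ⟨h1, h2, h3, h4⟩)
    · exact Relation.TransGen.single (Or.inl
        ((hGlt a b).mpr (Relation.TransGen.single (Or.inl h))))
    · exact Relation.TransGen.single (Or.inl
        ((hGlt a b).mpr (Relation.TransGen.single (Or.inr (Or.inl h)))))
    · exact Relation.TransGen.single (Or.inr (Or.inl h))
    · exact Relation.TransGen.single (Or.inl
        ((hGlt a b).mpr (Relation.TransGen.single (Or.inr (Or.inr h)))))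
    · refine Relation.TransGen.single (Or.inr (Or.inr ⟨?_, ?_, h3, h4⟩))
      · rw [hGev]; exact Finset.mem_union_right _ h1
      · rw [hGtgt]; exact h2
    · refine Relation.TransGen.single (Or.inr (Or.inr ⟨?_, ?_, h3, h4⟩))
      · rw [hGev]; exact Finset.mem_union_left _ h1
      · rw [hGtgt]
        intro ht
        exact h2 (mem_tgt_of_mem_both hPQ h1 (Q.tgt_sub ht))
  intro x y
  constructor
  · intro h
    have h1 : Relation.TransGen (s6 P Q Z) x y := by
      have := Relation.TransGen.mono (fun a b s => stepPY (a := a) (b := b) s) _ _ h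
      rwa [Relation.transGen_idem] at this
    have h2 := Relation.TransGen.mono (fun a b s => s6GZ (a := a) (b := b) s) _ _ h1
    have h3 : Relation.TransGen (Relation.TransGen (glueStep G Z)) x y := h2
    rwa [Relation.transGen_idem] at h3
  · intro h
    have h1 : Relation.TransGen (s6 P Q Z) x y := by
      have := Relation.TransGen.mono (fun a b s => stepGZ (a := a) (b := b) s) _ _ h
      rwa [Relation.transGen_idem] at this
    have h2 := Relation.TransGen.mono (fun a b s => s6PY (a := a) (b := b) s) _ _ h1
    have h3 : Relation.TransGen (Relation.TransGen (glueStep P Y)) x y := h2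
    rwa [Relation.transGen_idem] at h3

end Assoc


section Ident
variable {P Z Y : Ipomset E A}

/-- The identity ipomset on the source interface of `Z`. -/
def idOnSrc (Z : Ipomset E A) : Ipomset E A where
  events := Z.src
  lt _ _ := False
  evord x y := x ∈ Z.src ∧ y ∈ Z.src ∧ Z.evord x y
  src := Z.src
  tgt := Z.src
  lab := Z.lab
  lt_mem h := h.elim
  evord_mem h := ⟨h.1, h.2.1⟩
  lt_irrefl _ h := h
  lt_trans h := h.elim
  evord_irrefl x h := Z.evord_irrefl x h.2.2
  evord_trans h1 h2 := ⟨h1.1, h2.2.1, Z.evord_trans h1.2.2 h2.2.2⟩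
  order_total {x y} hx hy hne := by
    rcases Z.order_total (Z.src_sub hx) (Z.src_sub hy) hne with h | h | h | h
    · exact absurd h (Z.src_min hy)
    · exact absurd h (Z.src_min hx)
    · exact Or.inr (Or.inr (Or.inl ⟨hx, hy, h⟩))
    · exact Or.inr (Or.inr (Or.inr ⟨hy, hx, h⟩))
  src_sub := le_refl _
  tgt_sub := le_refl _
  src_min _ h := h
  tgt_max _ h := h

/-- The identity ipomset on the target interface of `Z`. -/
def idOnTgt (Z : Ipomset E A) : Ipomset E A where
  events := Z.tgt
  lt _ _ := False
  evord x y := x ∈ Z.tgt ∧ y ∈ Z.tgt ∧ Z.evord x y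
  src := Z.tgt
  tgt := Z.tgt
  lab := Z.lab
  lt_mem h := h.elim
  evord_mem h := ⟨h.1, h.2.1⟩
  lt_irrefl _ h := h
  lt_trans h := h.elim
  evord_irrefl x h := Z.evord_irrefl x h.2.2
  evord_trans h1 h2 := ⟨h1.1, h2.2.1, Z.evord_trans h1.2.2 h2.2.2⟩
  order_total {x y} hx hy hne := by
    rcases Z.order_total (Z.tgt_sub hx) (Z.tgt_sub hy) hne with h | h | h | h
    · exact absurd h (Z.tgt_max hx)
    · exact absurd h (Z.tgt_max hy)
    · exact Or.inr (Or.inr (Or.inl ⟨hx, hy, h⟩))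
    · exact Or.inr (Or.inr (Or.inr ⟨hy, hx, h⟩))
  src_sub := le_refl _
  tgt_sub := le_refl _
  src_min _ h := h
  tgt_max _ h := h

lemma idOnSrc_ident : (idOnSrc Z).IsIdentity := ⟨fun _ _ h => h, rfl, rfl⟩

lemma idOnTgt_ident : (idOnTgt Z).IsIdentity := ⟨fun _ _ h => h, rfl, rfl⟩

lemma idOnSrc_srcIface : (idOnSrc Z).srcIface = Z.srcIface := by
  apply Conclist.ext'
  · rfl
  · funext x y
    apply propext
    show x ∈ Z.src ∧ y ∈ Z.src ∧ (x ∈ Z.src ∧ y ∈ Z.src ∧ Z.evord x y) ↔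
      x ∈ Z.src ∧ y ∈ Z.src ∧ Z.evord x y
    tauto
  · rfl

lemma idOnTgt_srcIface : (idOnTgt Z).srcIface = Z.tgtIface := by
  apply Conclist.ext'
  · rfl
  · funext x y
    apply propext
    show x ∈ Z.tgt ∧ y ∈ Z.tgt ∧ (x ∈ Z.tgt ∧ y ∈ Z.tgt ∧ Z.evord x y) ↔
      x ∈ Z.tgt ∧ y ∈ Z.tgt ∧ Z.evord x y
    tauto
  · rfl

lemma isGlueOf_idOnSrc (Z : Ipomset E A) : IsGlueOf (idOnSrc Z) Z Z := by
  have hcomp : Composable (idOnSrc Z) Z := by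
    constructor
    · apply Conclist.ext'
      · rfl
      · funext x y
        apply propext
        show x ∈ Z.src ∧ y ∈ Z.src ∧ (x ∈ Z.src ∧ y ∈ Z.src ∧ Z.evord x y) ↔
          x ∈ Z.src ∧ y ∈ Z.src ∧ Z.evord x y
        tauto
      · rfl
    · show Z.src ∩ Z.events = Z.src
      exact Finset.inter_eq_left.mpr Z.src_sub
  refine ⟨hcomp, ?_, ?_, ?_, rfl, rfl, fun x _ => rfl, fun x _ => rfl⟩
  · show Z.events = Z.src ∪ Z.events
    rw [Finset.union_eq_right.mpr Z.src_sub]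
  · intro x y
    constructor
    · intro h; exact Relation.TransGen.single (Or.inr (Or.inl h))
    · intro h
      induction h with
      | single s =>
        rcases s with s | s | ⟨_, h2, _, _⟩
        · exact s.elim
        · exact s
        · exact absurd (by assumption) h2
      | tail _ s ih =>
        rcases s with s | s | ⟨h1, h2, _, _⟩
        · exact s.elim
        · exact Z.lt_trans ih s
        · exact absurd h1 h2
  · intro x y
    constructor
    · intro h; exact Or.inr h
    · rintro (h | h)
      · exact h.2.2
      · exact h

lemma isGlueOf_idOnTgt (Z : Ipomset E A) : IsGlueOf Z (idOnTgt Z) Z := by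
  have hcomp : Composable Z (idOnTgt Z) := by
    constructor
    · apply Conclist.ext'
      · rfl
      · funext x y
        apply propext
        show x ∈ Z.tgt ∧ y ∈ Z.tgt ∧ Z.evord x y ↔
          x ∈ Z.tgt ∧ y ∈ Z.tgt ∧ (x ∈ Z.tgt ∧ y ∈ Z.tgt ∧ Z.evord x y)
        tauto
      · rfl
    · show Z.events ∩ Z.tgt = Z.tgt
      exact Finset.inter_eq_right.mpr Z.tgt_sub
  refine ⟨hcomp, ?_, ?_, ?_, rfl, rfl, fun x _ => rfl, fun x _ => rfl⟩
  · show Z.events = Z.events ∪ Z.tgt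
    rw [Finset.union_eq_left.mpr Z.tgt_sub]
  · intro x y
    constructor
    · intro h; exact Relation.TransGen.single (Or.inl h)
    · intro h
      induction h with
      | single s =>
        rcases s with s | s | ⟨_, _, h3, h4⟩
        · exact s
        · exact s.elim
        · exact absurd h3 h4
      | tail _ s ih =>
        rcases s with s | s | ⟨_, _, h3, h4⟩
        · exact Z.lt_trans ih s
        · exact s.elim
        · exact absurd h3 h4
  · intro x y
    constructor
    · intro h; exact Or.inl h
    · rintro (h | h)
      · exact h
      · exact h.2.2

lemma isGlueOf_ident_left (hg : IsGlueOf P Z Y) (hP : P.IsIdentity) : IpoIso Y Z := by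
  obtain ⟨hc, hev, hlt, hevord, hsrc, htgt, hlabP, hlabQ⟩ := hg
  have hPsub : P.events ⊆ Z.events := by
    intro x hx
    have : x ∈ P.tgt := hP.2.2 ▸ hx
    exact Z.src_sub (hc.tgt_src ▸ this)
  have hYev : ∀ {x : E}, x ∈ Y.events ↔ x ∈ Z.events := by
    intro x
    rw [hev, Finset.mem_union]
    exact ⟨fun h => h.elim (fun h => hPsub h) id, Or.inr⟩
  refine ⟨id, ?_, ?_, ?_, ?_, ?_, ?_, ?_, ?_⟩
  · intro x hx; exact hYev.mp hx
  · intro x _ y _ h; exact h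
  · intro y hy; exact ⟨y, hYev.mpr hy, rfl⟩
  · intro x hx
    show x ∈ Y.src ↔ x ∈ Z.src
    rw [hsrc, ← hc.tgt_src, hP.2.1, ← hP.2.2]
  · intro x hx
    show x ∈ Y.tgt ↔ x ∈ Z.tgt
    rw [htgt]
  · intro x hx; exact (hlabQ x (hYev.mp hx)).symm
  · intro x hx y hy
    show Z.lt x y ↔ Y.lt x y
    constructor
    · intro h
      exact (hlt x y).mpr (Relation.TransGen.single (Or.inr (Or.inl h)))
    · intro h
      exact glueLt_confine_Q hc ((hlt x y).mp h) (hYev.mp hx)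
  · intro x hx y hy _ _
    show Y.evord x y ↔ Z.evord x y
    constructor
    · intro h
      rcases (hevord x y).mp h with h | h
      · have h1 : x ∈ P.tgt := hP.2.2 ▸ (P.evord_mem h).1
        have h2 : y ∈ P.tgt := hP.2.2 ▸ (P.evord_mem h).2
        exact (hc.evord_iface h1 h2).mp h
      · exact h
    · intro h; exact (hevord x y).mpr (Or.inr h)

lemma isGlueOf_ident_right (hg : IsGlueOf Z P Y) (hP : P.IsIdentity) : IpoIso Y Z := by
  obtain ⟨hc, hev, hlt, hevord, hsrc, htgt, hlabP, hlabQ⟩ := hg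
  have hPsub : P.events ⊆ Z.events := by
    intro x hx
    have : x ∈ P.src := hP.2.1 ▸ hx
    exact Z.tgt_sub (hc.tgt_src.symm ▸ this)
  have hYev : ∀ {x : E}, x ∈ Y.events ↔ x ∈ Z.events := by
    intro x
    rw [hev, Finset.mem_union]
    exact ⟨fun h => h.elim id (fun h => hPsub h), Or.inl⟩
  refine ⟨id, ?_, ?_, ?_, ?_, ?_, ?_, ?_, ?_⟩
  · intro x hx; exact hYev.mp hx
  · intro x _ y _ h; exact h
  · intro y hy; exact ⟨y, hYev.mpr hy, rfl⟩
  · intro x hx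
    show x ∈ Y.src ↔ x ∈ Z.src
    rw [hsrc]
  · intro x hx
    show x ∈ Y.tgt ↔ x ∈ Z.tgt
    rw [htgt, hP.2.2, ← hP.2.1, ← hc.tgt_src]
  · intro x hx; exact (hlabP x (hYev.mp hx)).symm
  · intro x hx y hy
    show Z.lt x y ↔ Y.lt x y
    constructor
    · intro h
      exact (hlt x y).mpr (Relation.TransGen.single (Or.inl h))
    · intro h
      exact glueLt_confine_P hc ((hlt x y).mp h) (hYev.mp hy)
  · intro x hx y hy _ _
    show Y.evord x y ↔ Z.evord x y
    constructor
    · intro h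
      rcases (hevord x y).mp h with h | h
      · exact h
      · have h1 : x ∈ Z.tgt := hc.tgt_src.symm ▸ (hP.2.1 ▸ (P.evord_mem h).1 : x ∈ P.src)
        have h2 : y ∈ Z.tgt := hc.tgt_src.symm ▸ (hP.2.1 ▸ (P.evord_mem h).2 : y ∈ P.src)
        exact (hc.evord_iface h1 h2).mpr h
    · intro h; exact (hevord x y).mpr (Or.inl h)

lemma IsGluing.ident_left (h : IsGluing P Z Y) (hP : P.IsIdentity) : IpoIso Y Z := by
  obtain ⟨P₁, Z₁, Y₁, i1, i2, i3, hgo⟩ := h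
  exact i3.trans ((isGlueOf_ident_left hgo (i1.isIdentity hP)).trans i2.symm)

lemma IsGluing.ident_right (h : IsGluing Z P Y) (hP : P.IsIdentity) : IpoIso Y Z := by
  obtain ⟨Z₁, P₁, Y₁, i1, i2, i3, hgo⟩ := h
  exact i3.trans ((isGlueOf_ident_right hgo (i2.isIdentity hP)).trans i1.symm)

lemma isGluing_idOnSrc (hP : P.IsIdentity) (hcl : ClIso P.srcIface Z.srcIface) :
    IsGluing P Z Z :=
  ⟨idOnSrc Z, Z, Z,
    ident_iso_of_clIso hP idOnSrc_ident (hcl.trans (clIso_of_eq idOnSrc_srcIface.symm)),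
    IpoIso.refl Z, IpoIso.refl Z, isGlueOf_idOnSrc Z⟩

lemma isGluing_idOnTgt (hP : P.IsIdentity) (hcl : ClIso Z.tgtIface P.srcIface) :
    IsGluing Z P Z :=
  ⟨Z, idOnTgt Z, Z, IpoIso.refl Z,
    ident_iso_of_clIso hP idOnTgt_ident
      (hcl.symm.trans (clIso_of_eq idOnTgt_srcIface.symm)),
    IpoIso.refl Z, isGlueOf_idOnTgt Z⟩

lemma isGlueOf_srcIface {Q R : Ipomset E A} (hg : IsGlueOf P Q R) :
    R.srcIface = P.srcIface := by
  obtain ⟨hc, hev, hlt, hevord, hsrc, htgt, hlabP, hlabQ⟩ := hg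
  apply Conclist.ext'
  · exact hsrc
  · funext x y
    apply propext
    show x ∈ R.src ∧ y ∈ R.src ∧ R.evord x y ↔ x ∈ P.src ∧ y ∈ P.src ∧ P.evord x y
    rw [hsrc]
    constructor
    · rintro ⟨hx, hy, he⟩
      refine ⟨hx, hy, ?_⟩
      rcases (hevord x y).mp he with h | h
      · exact h
      · have h1 : x ∈ P.tgt := mem_tgt_of_mem_both hc (P.src_sub hx) (Q.evord_mem h).1
        have h2 : y ∈ P.tgt := mem_tgt_of_mem_both hc (P.src_sub hy) (Q.evord_mem h).2
        exact (hc.evord_iface h1 h2).mpr h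
    · rintro ⟨hx, hy, he⟩
      exact ⟨hx, hy, (hevord x y).mpr (Or.inl he)⟩
  · funext x
    show (if x ∈ R.src then some (R.lab x) else none) =
      (if x ∈ P.src then some (P.lab x) else none)
    rw [hsrc]
    by_cases hx : x ∈ P.src
    · rw [if_pos hx, if_pos hx, hlabP x (P.src_sub hx)]
    · rw [if_neg hx, if_neg hx]

lemma isGlueOf_tgtIface {Q R : Ipomset E A} (hg : IsGlueOf P Q R) :
    R.tgtIface = Q.tgtIface := by
  obtain ⟨hc, hev, hlt, hevord, hsrc, htgt, hlabP, hlabQ⟩ := hg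
  apply Conclist.ext'
  · exact htgt
  · funext x y
    apply propext
    show x ∈ R.tgt ∧ y ∈ R.tgt ∧ R.evord x y ↔ x ∈ Q.tgt ∧ y ∈ Q.tgt ∧ Q.evord x y
    rw [htgt]
    constructor
    · rintro ⟨hx, hy, he⟩
      refine ⟨hx, hy, ?_⟩
      rcases (hevord x y).mp he with h | h
      · have h1 : x ∈ P.tgt := mem_tgt_of_mem_both hc (P.evord_mem h).1 (Q.tgt_sub hx)
        have h2 : y ∈ P.tgt := mem_tgt_of_mem_both hc (P.evord_mem h).2 (Q.tgt_sub hy)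
        exact (hc.evord_iface h1 h2).mp h
      · exact h
    · rintro ⟨hx, hy, he⟩
      exact ⟨hx, hy, (hevord x y).mpr (Or.inr he)⟩
  · funext x
    show (if x ∈ R.tgt then some (R.lab x) else none) =
      (if x ∈ Q.tgt then some (Q.lab x) else none)
    rw [htgt]
    by_cases hx : x ∈ Q.tgt
    · rw [if_pos hx, if_pos hx, hlabQ x (Q.tgt_sub hx)]
    · rw [if_neg hx, if_neg hx]

lemma glueWord_ne_nil {w : List (Ipomset E A)} {R : Ipomset E A} (h : GlueWord w R) :
    w ≠ [] := by
  cases h <;> simp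

lemma glueWord_clIso_src {a : Ipomset E A} {l : List (Ipomset E A)} {R : Ipomset E A}
    (h : GlueWord (a :: l) R) : ClIso a.srcIface R.srcIface := by
  cases h with
  | single => exact ClIso.refl _
  | cons _ _ M _ hM hg =>
    obtain ⟨P₁, X₁, S₁, i1, i2, i3, hgo⟩ := hg
    exact (i1.clIso_src.trans (clIso_of_eq (isGlueOf_srcIface hgo).symm)).trans
      i3.clIso_src.symm

lemma glueWord_clIso_tgt : ∀ {w : List (Ipomset E A)} {R : Ipomset E A},
    GlueWord w R → ∀ {l : Ipomset E A}, w.getLast? = some l →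
    ClIso l.tgtIface R.tgtIface := by
  intro w R h
  induction h with
  | single P =>
    intro l hl
    simp only [List.getLast?_singleton, Option.some.injEq] at hl
    subst hl
    exact ClIso.refl _
  | cons P w R S hw hg ih =>
    intro l hl
    have hne : w ≠ [] := glueWord_ne_nil hw
    obtain ⟨b, w', rfl⟩ := List.exists_cons_of_ne_nil hne
    rw [List.getLast?_cons_cons] at hl
    have h1 := ih hl
    obtain ⟨P₁, X₁, S₁, i1, i2, i3, hgo⟩ := hg
    exact ((h1.trans i2.clIso_tgt).trans
      (clIso_of_eq (isGlueOf_tgtIface hgo).symm)).trans i3.clIso_tgt.symm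

end Ident


section BigFwd
variable {P Q R Zv Y X : Ipomset E A}

lemma sharpen_discrete {P : Ipomset E A} {h : EvInv P} (hd : P.Discrete) :
    (sharpen P h).Discrete := hd

lemma glue_fwd (hPd : P.Discrete) (hQd : Q.Discrete) (hZinv : EvInv Zv)
    (hGl : IsGluing P Q R) (hY : IsGluing Q Zv Y) (hX : IsGluing P Y X) :
    ∃ W, IsGluing R Zv W ∧ IpoIso X W := by
  obtain ⟨Q₂, Z₂, Y₂, iQ2, iZ2, iY2, G2⟩ := hY
  obtain ⟨P₃, Y₃, X₃, iP3, iY3, iX3, G3⟩ := hX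
  have hQ₂ : EvInv Q₂ := EvInv.iso (evInv_of_discrete hQd) iQ2
  have hZ₂ : EvInv Z₂ := EvInv.iso hZinv iZ2
  have hY₂ : EvInv Y₂ := EvInv.glue G2 hQ₂ hZ₂
  have hYInv : EvInv Y := EvInv.iso hY₂ iY2.symm
  have hY₃ : EvInv Y₃ := EvInv.iso hYInv iY3
  have hP₃ : EvInv P₃ := EvInv.iso (evInv_of_discrete hPd) iP3
  have hX₃ : EvInv X₃ := EvInv.glue G3 hP₃ hY₃
  set Qs := sharpen Q₂ hQ₂ with hQsdef
  set Zs := sharpen Z₂ hZ₂ with hZsdef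
  set Yc := sharpen Y₂ hY₂ with hYcdef
  set Ps := sharpen P₃ hP₃ with hPsdef
  set Ys := sharpen Y₃ hY₃ with hYsdef
  set Xs := sharpen X₃ hX₃ with hXsdef
  have G2' : IsGlueOf Qs Zs Yc := isGlueOf_sharpen G2 hQ₂ hZ₂ hY₂
  have G3' : IsGlueOf Ps Ys Xs := isGlueOf_sharpen G3 hP₃ hY₃ hX₃
  have sharpQs : Sharp Qs := sharpen_sharp hQ₂
  have sharpZs : Sharp Zs := sharpen_sharp hZ₂
  have sharpYc : Sharp Yc := sharpen_sharp hY₂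
  have sharpPs : Sharp Ps := sharpen_sharp hP₃
  have sharpYs : Sharp Ys := sharpen_sharp hY₃
  have hPsd : Ps.Discrete := sharpen_discrete (iP3.discrete hPd)
  have hQsd : Qs.Discrete := sharpen_discrete (iQ2.discrete hQd)
  have iYcYs : IpoIso Yc Ys :=
    ((sharpen_iso hY₂).symm.trans (iY2.symm.trans iY3)).trans (sharpen_iso hY₃)
  obtain ⟨k, hk⟩ := iYcYs
  obtain ⟨cQZ, evQZ, ltQZ, eoQZ, srcQZ, tgtQZ, labQZ1, labQZ2⟩ := G2'
  obtain ⟨cPY, evPY, ltPY, eoPY, srcPY, tgtPY, labPY1, labPY2⟩ := G3'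
  have hQsub : Qs.events ⊆ Yc.events := by rw [evQZ]; exact Finset.subset_union_left
  have hZsub : Zs.events ⊆ Yc.events := by rw [evQZ]; exact Finset.subset_union_right
  have hinjQ : ∀ a ∈ Qs.events, ∀ b ∈ Qs.events, k a = k b → a = b :=
    fun a ha b hb => hk.inj a (hQsub ha) b (hQsub hb)
  have hinjZ : ∀ a ∈ Zs.events, ∀ b ∈ Zs.events, k a = k b → a = b :=
    fun a ha b hb => hk.inj a (hZsub ha) b (hZsub hb)
  have hlabQ : ∀ a ∈ Qs.events, Ys.lab (k a) = Qs.lab a :=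
    fun a ha => (hk.lab_eq a (hQsub ha)).trans (labQZ1 a ha)
  have hlabZ : ∀ a ∈ Zs.events, Ys.lab (k a) = Zs.lab a :=
    fun a ha => (hk.lab_eq a (hZsub ha)).trans (labQZ2 a ha)
  set Q₃ := mapIpo k Qs Ys.lab hinjQ with hQ3def
  set Z₃ := mapIpo k Zs Ys.lab hinjZ with hZ3def
  have kQ : IsIpoIso Qs Q₃ k := isIpoIso_mapIpo hlabQ
  have kZ : IsIpoIso Zs Z₃ k := isIpoIso_mapIpo hlabZ
  have sharpQ3 : Sharp Q₃ := mapIpo_sharp sharpQs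
  have sharpZ3 : Sharp Z₃ := mapIpo_sharp sharpZs
  have hcQ3Z3 : Composable Q₃ Z₃ :=
    composable_mapIpo cQZ (fun a ha b hb => hk.inj a (hQsub ha) b (hZsub hb))
  -- facts about Ys as the glue of Q₃ and Z₃
  have hYsev : Ys.events = Q₃.events ∪ Z₃.events := by
    show Ys.events = Qs.events.image k ∪ Zs.events.image k
    rw [← Finset.image_union, ← evQZ, ← hk.events_image]
  have hYssrc : Ys.src = Q₃.src := by
    show Ys.src = Qs.src.image k
    rw [← srcQZ, ← hk.src_image]
  have hYstgt : Ys.tgt = Z₃.tgt := by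
    show Ys.tgt = Zs.tgt.image k
    rw [← tgtQZ, ← hk.tgt_image]
  have hYslt : ∀ x y, Ys.lt x y ↔ glueLt Q₃ Z₃ x y := by
    intro x y
    constructor
    · intro h
      obtain ⟨a, ha, rfl⟩ := hk.surj x (Ys.lt_mem h).1
      obtain ⟨b, hb, rfl⟩ := hk.surj y (Ys.lt_mem h).2
      have h1 : Yc.lt a b := (hk.lt_iff a ha b hb).mp h
      have h2 : glueLt Qs Zs a b := (ltQZ a b).mp h1
      have ha' : a ∈ Qs.events ∨ a ∈ Zs.events := by
        have := ha; rw [evQZ] at this; exact Finset.mem_union.mp this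
      have hb' : b ∈ Qs.events ∨ b ∈ Zs.events := by
        have := hb; rw [evQZ] at this; exact Finset.mem_union.mp this
      exact (glueLt_congr cQZ hcQ3Z3 kQ kZ ha' hb').mp h2
    · intro h
      have hx := (glueLt_mem h).1
      have hy := (glueLt_mem h).2
      have hpre : ∀ {u : E}, (u ∈ Q₃.events ∨ u ∈ Z₃.events) →
          ∃ a, (a ∈ Qs.events ∨ a ∈ Zs.events) ∧ k a = u := by
        rintro u (hu | hu)
        · obtain ⟨a, ha, rfl⟩ := Finset.mem_image.mp hu
          exact ⟨a, Or.inl ha, rfl⟩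
        · obtain ⟨a, ha, rfl⟩ := Finset.mem_image.mp hu
          exact ⟨a, Or.inr ha, rfl⟩
      obtain ⟨a, ha, rfl⟩ := hpre hx
      obtain ⟨b, hb, rfl⟩ := hpre hy
      have h2 : glueLt Qs Zs a b := (glueLt_congr cQZ hcQ3Z3 kQ kZ ha hb).mpr h
      have h3 : Yc.lt a b := (ltQZ a b).mpr h2
      have haY : a ∈ Yc.events := ha.elim (fun h => hQsub h) (fun h => hZsub h)
      have hbY : b ∈ Yc.events := hb.elim (fun h => hQsub h) (fun h => hZsub h)
      exact (hk.lt_iff a haY b hbY).mpr h3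
  -- event order embeddings and decomposition
  have embQ : ∀ {x y : E}, Q₃.evord x y → Ys.evord x y := by
    rintro x y ⟨a, ha, b, hb, rfl, rfl, he⟩
    have h1 : Yc.evord a b := (eoQZ a b).mpr (Or.inl he)
    exact (hk.evord_iff' sharpYc sharpYs (hQsub ha) (hQsub hb)).mp h1
  have embZ : ∀ {x y : E}, Z₃.evord x y → Ys.evord x y := by
    rintro x y ⟨a, ha, b, hb, rfl, rfl, he⟩
    have h1 : Yc.evord a b := (eoQZ a b).mpr (Or.inr he)
    exact (hk.evord_iff' sharpYc sharpYs (hZsub ha) (hZsub hb)).mp h1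
  have decompYs : ∀ {x y : E}, Ys.evord x y → Q₃.evord x y ∨ Z₃.evord x y := by
    intro x y he
    obtain ⟨a, ha, rfl⟩ := hk.surj x (Ys.evord_mem he).1
    obtain ⟨b, hb, rfl⟩ := hk.surj y (Ys.evord_mem he).2
    have h1 : Yc.evord a b := (hk.evord_iff' sharpYc sharpYs ha hb).mpr he
    rcases (eoQZ a b).mp h1 with h | h
    · exact Or.inl ⟨a, (Qs.evord_mem h).1, b, (Qs.evord_mem h).2, rfl, rfl, h⟩
    · exact Or.inr ⟨a, (Zs.evord_mem h).1, b, (Zs.evord_mem h).2, rfl, rfl, h⟩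
  -- source interface of Ys equals that of Q₃
  have hsrcYsQ3 : Ys.srcIface = Q₃.srcIface := by
    apply Conclist.ext'
    · exact hYssrc
    · funext x y
      apply propext
      show x ∈ Ys.src ∧ y ∈ Ys.src ∧ Ys.evord x y ↔
        x ∈ Q₃.src ∧ y ∈ Q₃.src ∧ Q₃.evord x y
      rw [hYssrc]
      constructor
      · rintro ⟨hx, hy, he⟩
        refine ⟨hx, hy, ?_⟩
        rcases decompYs he with h | h
        · exact h
        · obtain ⟨a, ha, b, hb, e1, e2, he'⟩ := h
          obtain ⟨a₀, ha₀, e1'⟩ := Finset.mem_image.mp (show x ∈ Qs.src.image k from hx)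
          obtain ⟨b₀, hb₀, e2'⟩ := Finset.mem_image.mp (show y ∈ Qs.src.image k from hy)
          have eq1 : a₀ = a := hk.inj a₀ (hQsub (Qs.src_sub ha₀)) a (hZsub ha)
            (by rw [e1', e1])
          have eq2 : b₀ = b := hk.inj b₀ (hQsub (Qs.src_sub hb₀)) b (hZsub hb)
            (by rw [e2', e2])
          have haq : a ∈ Qs.events := Qs.src_sub (eq1 ▸ ha₀)
          have hbq : b ∈ Qs.events := Qs.src_sub (eq2 ▸ hb₀)
          have hat : a ∈ Qs.tgt := mem_tgt_of_mem_both cQZ haq ha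
          have hbt : b ∈ Qs.tgt := mem_tgt_of_mem_both cQZ hbq hb
          have : Qs.evord a b := (cQZ.evord_iface hat hbt).mpr he'
          exact ⟨a, haq, b, hbq, e1, e2, this⟩
      · rintro ⟨hx, hy, he⟩
        exact ⟨hx, hy, embQ he⟩
    · funext x
      show (if x ∈ Ys.src then some (Ys.lab x) else none) =
        (if x ∈ Q₃.src then some (Ys.lab x) else none)
      rw [hYssrc]
  -- Composable Ps Q₃
  have hcPQ3 : Composable Ps Q₃ := by
    refine ⟨cPY.1.trans hsrcYsQ3, ?_⟩
    ext x
    simp only [Finset.mem_inter]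
    constructor
    · rintro ⟨h1, h2⟩
      have h3 : x ∈ Ys.events := by rw [hYsev]; exact Finset.mem_union_left _ h2
      exact mem_tgt_of_mem_both cPY h1 h3
    · intro h
      refine ⟨Ps.tgt_sub h, ?_⟩
      have : x ∈ Ys.src := cPY.tgt_src ▸ h
      rw [hYssrc] at this
      exact Q₃.src_sub this
  -- transitivity of the joint event order of Ps and Q₃
  have embPX : ∀ {x y : E}, Ps.evord x y → Xs.evord x y :=
    fun he => (eoPY _ _).mpr (Or.inl he)
  have embYX : ∀ {x y : E}, Ys.evord x y → Xs.evord x y :=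
    fun he => (eoPY _ _).mpr (Or.inr he)
  have memQ3 : ∀ {u : E}, (u ∈ Ps.events ∨ u ∈ Q₃.events) → u ∈ Ys.events →
      u ∈ Q₃.events := by
    rintro u (hu | hu) huY
    · have : u ∈ Ps.tgt := mem_tgt_of_mem_both cPY hu huY
      have : u ∈ Ys.src := cPY.tgt_src ▸ this
      rw [hYssrc] at this
      exact Q₃.src_sub this
    · exact hu
  have htrPQ3 : ∀ {x y z : E}, glueEvord Ps Q₃ x y → glueEvord Ps Q₃ y z →
      glueEvord Ps Q₃ x z := by
    intro x y z h1 h2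
    have e1 : Xs.evord x y := h1.elim embPX (fun h => embYX (embQ h))
    have e2 : Xs.evord y z := h2.elim embPX (fun h => embYX (embQ h))
    have e3 : Xs.evord x z := Xs.evord_trans e1 e2
    have hxm : x ∈ Ps.events ∨ x ∈ Q₃.events := by
      rcases h1 with h | h
      · exact Or.inl (Ps.evord_mem h).1
      · exact Or.inr (Q₃.evord_mem h).1
    have hzm : z ∈ Ps.events ∨ z ∈ Q₃.events := by
      rcases h2 with h | h
      · exact Or.inl (Ps.evord_mem h).2
      · exact Or.inr (Q₃.evord_mem h).2
    rcases (eoPY x z).mp e3 with h | h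
    · exact Or.inl h
    · rcases decompYs h with h' | h'
      · exact Or.inr h'
      · have hxq : x ∈ Q₃.events := memQ3 hxm (Ys.evord_mem h).1
        have hzq : z ∈ Q₃.events := memQ3 hzm (Ys.evord_mem h).2
        have hxt : x ∈ Q₃.tgt := mem_tgt_of_mem_both hcQ3Z3 hxq (Z₃.evord_mem h').1
        have hzt : z ∈ Q₃.tgt := mem_tgt_of_mem_both hcQ3Z3 hzq (Z₃.evord_mem h').2
        exact Or.inr ((hcQ3Z3.evord_iface hxt hzt).mpr h')
  set Rst := glueOf Ps Q₃ hcPQ3 htrPQ3 with hRstdef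
  have GRst : IsGlueOf Ps Q₃ Rst := isGlueOf_glueOf hcPQ3 htrPQ3
  -- R is isomorphic to Rst
  obtain ⟨P₁, Q₁, R₁, i1, i2, i3, G1⟩ := hGl
  have hRiso : IpoIso R Rst := by
    refine i3.trans (glue_core G1 GRst ?_ ?_)
    · exact i1.symm.trans (iP3.trans (sharpen_iso hP₃))
    · exact i2.symm.trans ((iQ2.trans (sharpen_iso hQ₂)).trans ⟨k, kQ⟩)
  -- Composable Rst Z₃
  have hTRQ : Rst.tgtIface = Q₃.tgtIface := by
    apply Conclist.ext'
    · rfl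
    · funext x y
      apply propext
      show x ∈ Q₃.tgt ∧ y ∈ Q₃.tgt ∧ (Ps.evord x y ∨ Q₃.evord x y) ↔
        x ∈ Q₃.tgt ∧ y ∈ Q₃.tgt ∧ Q₃.evord x y
      constructor
      · rintro ⟨hx, hy, he | he⟩
        · have hx1 : x ∈ Ps.tgt :=
            mem_tgt_of_mem_both hcPQ3 (Ps.evord_mem he).1 (Q₃.tgt_sub hx)
          have hy1 : y ∈ Ps.tgt :=
            mem_tgt_of_mem_both hcPQ3 (Ps.evord_mem he).2 (Q₃.tgt_sub hy)
          exact ⟨hx, hy, (hcPQ3.evord_iface hx1 hy1).mp he⟩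
        · exact ⟨hx, hy, he⟩
      · rintro ⟨hx, hy, he⟩
        exact ⟨hx, hy, Or.inr he⟩
    · funext x
      show (if x ∈ Q₃.tgt then some (Rst.lab x) else none) =
        (if x ∈ Q₃.tgt then some (Q₃.lab x) else none)
      by_cases hx : x ∈ Q₃.tgt
      · rw [if_pos hx, if_pos hx]
        show some (if x ∈ Ps.events then Ps.lab x else Q₃.lab x) = _
        by_cases hp : x ∈ Ps.events
        · rw [if_pos hp]
          have h1 : x ∈ Ps.tgt := mem_tgt_of_mem_both hcPQ3 hp (Q₃.tgt_sub hx)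
          rw [hcPQ3.lab_iface h1]
        · rw [if_neg hp]
      · rw [if_neg hx, if_neg hx]
  have hcRZ : Composable Rst Z₃ := by
    refine ⟨hTRQ.trans hcQ3Z3.1, ?_⟩
    show (Ps.events ∪ Q₃.events) ∩ Z₃.events = Q₃.tgt
    ext x
    simp only [Finset.mem_inter, Finset.mem_union]
    constructor
    · rintro ⟨h1 | h1, h2⟩
      · have h3 : x ∈ Ys.events := by rw [hYsev]; exact Finset.mem_union_right _ h2
        have h4 : x ∈ Ps.tgt := mem_tgt_of_mem_both cPY h1 h3
        have h5 : x ∈ Ys.src := cPY.tgt_src ▸ h4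
        rw [hYssrc] at h5
        exact mem_tgt_of_mem_both hcQ3Z3 (Q₃.src_sub h5) h2
      · exact mem_tgt_of_mem_both hcQ3Z3 h1 h2
    · intro h
      exact ⟨Or.inr (Q₃.tgt_sub h), Z₃.src_sub (hcQ3Z3.tgt_src ▸ h)⟩
  -- the final glue relation
  have GF : IsGlueOf Rst Z₃ Xs := by
    refine ⟨hcRZ, ?_, ?_, ?_, ?_, ?_, ?_, ?_⟩
    · show Xs.events = (Ps.events ∪ Q₃.events) ∪ Z₃.events
      rw [evPY, hYsev, Finset.union_assoc]
    · intro x y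
      rw [ltPY x y]
      exact (glueLt_assoc (G := Rst) hcPQ3 hcQ3Z3 hYsev hYslt hYssrc rfl (fun _ _ => Iff.rfl) rfl x y)
    · intro x y
      constructor
      · intro he
        rcases (eoPY x y).mp he with h | h
        · exact Or.inl (Or.inl h)
        · rcases decompYs h with h' | h'
          · exact Or.inl (Or.inr h')
          · exact Or.inr h'
      · rintro ((h | h) | h)
        · exact (eoPY x y).mpr (Or.inl h)
        · exact (eoPY x y).mpr (Or.inr (embQ h))
        · exact (eoPY x y).mpr (Or.inr (embZ h))
    · exact srcPY
    · rw [tgtPY]; exact hYstgt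
    · intro x hx
      show Xs.lab x = if x ∈ Ps.events then Ps.lab x else Q₃.lab x
      by_cases hp : x ∈ Ps.events
      · rw [if_pos hp]; exact labPY1 x hp
      · rw [if_neg hp]
        have hxq : x ∈ Q₃.events := by
          rcases Finset.mem_union.mp hx with h | h
          · exact absurd h hp
          · exact h
        have hxY : x ∈ Ys.events := by rw [hYsev]; exact Finset.mem_union_left _ hxq
        exact labPY2 x hxY
    · intro x hx
      have hxY : x ∈ Ys.events := by rw [hYsev]; exact Finset.mem_union_right _ hx
      exact labPY2 x hxY
  refine ⟨Xs, ⟨Rst, Z₃, Xs, hRiso, ?_, IpoIso.refl Xs, GF⟩, iX3.trans (sharpen_iso hX₃)⟩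
  exact iZ2.trans ((sharpen_iso hZ₂).trans ⟨k, kZ⟩)

end BigFwd


section BigBwd
variable {P Q R Zv X : Ipomset E A}

lemma glue_bwd (hPd : P.Discrete) (hQd : Q.Discrete) (hZinv : EvInv Zv)
    (hGl : IsGluing P Q R) (hRZ : IsGluing R Zv X) :
    ∃ Y W, IsGluing Q Zv Y ∧ IsGluing P Y W ∧ IpoIso X W := by
  obtain ⟨P₁, Q₁, R₁, i1, i2, i3, G1⟩ := hGl
  obtain ⟨R₄, Z₄, X₄, j1, j2, j3, G4⟩ := hRZ
  have hP₁ : EvInv P₁ := EvInv.iso (evInv_of_discrete hPd) i1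
  have hQ₁ : EvInv Q₁ := EvInv.iso (evInv_of_discrete hQd) i2
  have hR₁ : EvInv R₁ := EvInv.glue G1 hP₁ hQ₁
  have hRinv : EvInv R := EvInv.iso hR₁ i3.symm
  have hR₄ : EvInv R₄ := EvInv.iso hRinv j1
  have hZ₄ : EvInv Z₄ := EvInv.iso hZinv j2
  have hX₄ : EvInv X₄ := EvInv.glue G4 hR₄ hZ₄
  set P1s := sharpen P₁ hP₁ with hP1sdef
  set Q1s := sharpen Q₁ hQ₁ with hQ1sdef
  set R1s := sharpen R₁ hR₁ with hR1sdef
  set R4s := sharpen R₄ hR₄ with hR4sdef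
  set Z4s := sharpen Z₄ hZ₄ with hZ4sdef
  set X4s := sharpen X₄ hX₄ with hX4sdef
  have G1' : IsGlueOf P1s Q1s R1s := isGlueOf_sharpen G1 hP₁ hQ₁ hR₁
  have G4' : IsGlueOf R4s Z4s X4s := isGlueOf_sharpen G4 hR₄ hZ₄ hX₄
  have sharpP1 : Sharp P1s := sharpen_sharp hP₁
  have sharpQ1 : Sharp Q1s := sharpen_sharp hQ₁
  have sharpR1 : Sharp R1s := sharpen_sharp hR₁
  have sharpR4 : Sharp R4s := sharpen_sharp hR₄
  have sharpZ4 : Sharp Z4s := sharpen_sharp hZ₄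
  have sharpX4 : Sharp X4s := sharpen_sharp hX₄
  have irr : IpoIso R1s R4s :=
    (sharpen_iso hR₁).symm.trans (i3.symm.trans (j1.trans (sharpen_iso hR₄)))
  obtain ⟨r, hr⟩ := irr
  obtain ⟨cPQ, evPQ, ltPQ, eoPQ, srcPQ, tgtPQ, labPQ1, labPQ2⟩ := G1'
  obtain ⟨cRZ, evRZ, ltRZ, eoRZ, srcRZ, tgtRZ, labRZ1, labRZ2⟩ := G4'
  have hPsub : P1s.events ⊆ R1s.events := by rw [evPQ]; exact Finset.subset_union_left
  have hQsub : Q1s.events ⊆ R1s.events := by rw [evPQ]; exact Finset.subset_union_right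
  have hinjP : ∀ a ∈ P1s.events, ∀ b ∈ P1s.events, r a = r b → a = b :=
    fun a ha b hb => hr.inj a (hPsub ha) b (hPsub hb)
  have hinjQ : ∀ a ∈ Q1s.events, ∀ b ∈ Q1s.events, r a = r b → a = b :=
    fun a ha b hb => hr.inj a (hQsub ha) b (hQsub hb)
  have hlabP : ∀ a ∈ P1s.events, X4s.lab (r a) = P1s.lab a := by
    intro a ha
    rw [labRZ1 _ (hr.maps a (hPsub ha)), hr.lab_eq a (hPsub ha), labPQ1 a ha]
  have hlabQ : ∀ a ∈ Q1s.events, X4s.lab (r a) = Q1s.lab a := by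
    intro a ha
    rw [labRZ1 _ (hr.maps a (hQsub ha)), hr.lab_eq a (hQsub ha), labPQ2 a ha]
  set P₅ := mapIpo r P1s X4s.lab hinjP with hP5def
  set Q₅ := mapIpo r Q1s X4s.lab hinjQ with hQ5def
  have rP : IsIpoIso P1s P₅ r := isIpoIso_mapIpo hlabP
  have rQ : IsIpoIso Q1s Q₅ r := isIpoIso_mapIpo hlabQ
  have sharpP5 : Sharp P₅ := mapIpo_sharp sharpP1
  have sharpQ5 : Sharp Q₅ := mapIpo_sharp sharpQ1
  have hcP5Q5 : Composable P₅ Q₅ :=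
    composable_mapIpo cPQ (fun a ha b hb => hr.inj a (hPsub ha) b (hQsub hb))
  -- R4s is the gluing of P₅ and Q₅
  have G5 : IsGlueOf P₅ Q₅ R4s := by
    refine ⟨hcP5Q5, ?_, ?_, ?_, ?_, ?_, ?_, ?_⟩
    · show R4s.events = P1s.events.image r ∪ Q1s.events.image r
      rw [← Finset.image_union, ← evPQ, ← hr.events_image]
    · intro x y
      constructor
      · intro h
        obtain ⟨a, ha, rfl⟩ := hr.surj x (R4s.lt_mem h).1
        obtain ⟨b, hb, rfl⟩ := hr.surj y (R4s.lt_mem h).2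
        have h1 : R1s.lt a b := (hr.lt_iff a ha b hb).mp h
        have ha' : a ∈ P1s.events ∨ a ∈ Q1s.events := by
          have := ha; rw [evPQ] at this; exact Finset.mem_union.mp this
        have hb' : b ∈ P1s.events ∨ b ∈ Q1s.events := by
          have := hb; rw [evPQ] at this; exact Finset.mem_union.mp this
        exact (glueLt_congr cPQ hcP5Q5 rP rQ ha' hb').mp ((ltPQ a b).mp h1)
      · intro h
        have hpre : ∀ {u : E}, (u ∈ P₅.events ∨ u ∈ Q₅.events) →
            ∃ a, (a ∈ P1s.events ∨ a ∈ Q1s.events) ∧ r a = u := by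
          rintro u (hu | hu)
          · obtain ⟨a, ha, rfl⟩ := Finset.mem_image.mp hu
            exact ⟨a, Or.inl ha, rfl⟩
          · obtain ⟨a, ha, rfl⟩ := Finset.mem_image.mp hu
            exact ⟨a, Or.inr ha, rfl⟩
        obtain ⟨a, ha, rfl⟩ := hpre (glueLt_mem h).1
        obtain ⟨b, hb, rfl⟩ := hpre (glueLt_mem h).2
        have h2 : glueLt P1s Q1s a b := (glueLt_congr cPQ hcP5Q5 rP rQ ha hb).mpr h
        have haR : a ∈ R1s.events := ha.elim (fun h => hPsub h) (fun h => hQsub h)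
        have hbR : b ∈ R1s.events := hb.elim (fun h => hPsub h) (fun h => hQsub h)
        exact (hr.lt_iff a haR b hbR).mpr ((ltPQ a b).mpr h2)
    · intro x y
      constructor
      · intro he
        obtain ⟨a, ha, rfl⟩ := hr.surj x (R4s.evord_mem he).1
        obtain ⟨b, hb, rfl⟩ := hr.surj y (R4s.evord_mem he).2
        have h1 : R1s.evord a b := (hr.evord_iff' sharpR1 sharpR4 ha hb).mpr he
        rcases (eoPQ a b).mp h1 with h | h
        · exact Or.inl ⟨a, (P1s.evord_mem h).1, b, (P1s.evord_mem h).2, rfl, rfl, h⟩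
        · exact Or.inr ⟨a, (Q1s.evord_mem h).1, b, (Q1s.evord_mem h).2, rfl, rfl, h⟩
      · rintro (⟨a, ha, b, hb, rfl, rfl, he⟩ | ⟨a, ha, b, hb, rfl, rfl, he⟩)
        · exact (hr.evord_iff' sharpR1 sharpR4 (hPsub ha) (hPsub hb)).mp
            ((eoPQ a b).mpr (Or.inl he))
        · exact (hr.evord_iff' sharpR1 sharpR4 (hQsub ha) (hQsub hb)).mp
            ((eoPQ a b).mpr (Or.inr he))
    · show R4s.src = P1s.src.image r
      rw [hr.src_image]
      show R1s.src.image r = P1s.src.image r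
      rw [srcPQ]
    · show R4s.tgt = Q1s.tgt.image r
      rw [hr.tgt_image]
      show R1s.tgt.image r = Q1s.tgt.image r
      rw [tgtPQ]
    · intro x hx
      obtain ⟨a, ha, rfl⟩ := Finset.mem_image.mp hx
      exact (labRZ1 _ (hr.maps a (hPsub ha))).symm
    · intro x hx
      obtain ⟨a, ha, rfl⟩ := Finset.mem_image.mp hx
      exact (labRZ1 _ (hr.maps a (hQsub ha))).symm
  -- Composable Q₅ Z4s
  have hQ5tgt : R4s.tgt = Q₅.tgt := G5.2.2.2.2.2.1
  have hQ5sub : Q₅.events ⊆ R4s.events := by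
    rw [G5.2.1]; exact Finset.subset_union_right
  have hP5sub : P₅.events ⊆ R4s.events := by
    rw [G5.2.1]; exact Finset.subset_union_left
  have hcQ5Z4 : Composable Q₅ Z4s := by
    refine ⟨(isGlueOf_tgtIface G5).symm.trans cRZ.1, ?_⟩
    ext x
    simp only [Finset.mem_inter]
    constructor
    · rintro ⟨h1, h2⟩
      have h3 : x ∈ R4s.tgt := mem_tgt_of_mem_both cRZ (hQ5sub h1) h2
      rw [hQ5tgt] at h3
      exact h3
    · intro h
      refine ⟨Q₅.tgt_sub h, ?_⟩
      have : x ∈ R4s.tgt := hQ5tgt ▸ h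
      exact Z4s.src_sub (cRZ.tgt_src ▸ this)
  -- transitivity of the joint event order of Q₅ and Z4s
  have embQX : ∀ {x y : E}, Q₅.evord x y → X4s.evord x y :=
    fun he => (eoRZ _ _).mpr (Or.inl ((G5.2.2.2.1 _ _).mpr (Or.inr he)))
  have embZX : ∀ {x y : E}, Z4s.evord x y → X4s.evord x y :=
    fun he => (eoRZ _ _).mpr (Or.inr he)
  have memQ5 : ∀ {u : E}, (u ∈ Q₅.events ∨ u ∈ Z4s.events) → u ∈ P₅.events →
      u ∈ Q₅.events := by
    rintro u (hu | hu) huP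
    · exact hu
    · have h1 : u ∈ R4s.tgt := mem_tgt_of_mem_both cRZ (hP5sub huP) hu
      rw [hQ5tgt] at h1
      exact Q₅.tgt_sub h1
  have htrQ5Z4 : ∀ {x y z : E}, glueEvord Q₅ Z4s x y → glueEvord Q₅ Z4s y z →
      glueEvord Q₅ Z4s x z := by
    intro x y z h1 h2
    have e1 : X4s.evord x y := h1.elim embQX embZX
    have e2 : X4s.evord y z := h2.elim embQX embZX
    have e3 : X4s.evord x z := X4s.evord_trans e1 e2
    have hxm : x ∈ Q₅.events ∨ x ∈ Z4s.events := by
      rcases h1 with h | h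
      · exact Or.inl (Q₅.evord_mem h).1
      · exact Or.inr (Z4s.evord_mem h).1
    have hzm : z ∈ Q₅.events ∨ z ∈ Z4s.events := by
      rcases h2 with h | h
      · exact Or.inl (Q₅.evord_mem h).2
      · exact Or.inr (Z4s.evord_mem h).2
    rcases (eoRZ x z).mp e3 with h | h
    · rcases (G5.2.2.2.1 x z).mp h with h' | h'
      · have hxq : x ∈ Q₅.events := memQ5 hxm (P₅.evord_mem h').1
        have hzq : z ∈ Q₅.events := memQ5 hzm (P₅.evord_mem h').2
        have hxt : x ∈ P₅.tgt := mem_tgt_of_mem_both hcP5Q5 (P₅.evord_mem h').1 hxq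
        have hzt : z ∈ P₅.tgt := mem_tgt_of_mem_both hcP5Q5 (P₅.evord_mem h').2 hzq
        exact Or.inl ((hcP5Q5.evord_iface hxt hzt).mp h')
      · exact Or.inl h'
    · exact Or.inr h
  set Y5 := glueOf Q₅ Z4s hcQ5Z4 htrQ5Z4 with hY5def
  have GY : IsGlueOf Q₅ Z4s Y5 := isGlueOf_glueOf hcQ5Z4 htrQ5Z4
  -- Composable P₅ Y5
  have hcP5Y5 : Composable P₅ Y5 := by
    refine ⟨hcP5Q5.1.trans (isGlueOf_srcIface GY).symm, ?_⟩
    show P₅.events ∩ (Q₅.events ∪ Z4s.events) = P₅.tgt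
    ext x
    simp only [Finset.mem_inter, Finset.mem_union]
    constructor
    · rintro ⟨h1, h2 | h2⟩
      · exact mem_tgt_of_mem_both hcP5Q5 h1 h2
      · have h3 : x ∈ R4s.tgt := mem_tgt_of_mem_both cRZ (hP5sub h1) h2
        rw [hQ5tgt] at h3
        exact mem_tgt_of_mem_both hcP5Q5 h1 (Q₅.tgt_sub h3)
    · intro h
      exact ⟨P₅.tgt_sub h, Or.inl (Q₅.src_sub (hcP5Q5.tgt_src ▸ h))⟩
  -- X4s is the gluing of P₅ and Y5
  have GX : IsGlueOf P₅ Y5 X4s := by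
    refine ⟨hcP5Y5, ?_, ?_, ?_, ?_, ?_, ?_, ?_⟩
    · show X4s.events = P₅.events ∪ (Q₅.events ∪ Z4s.events)
      rw [evRZ, G5.2.1, Finset.union_assoc]
    · intro x y
      rw [ltRZ x y]
      exact (glueLt_assoc (G := R4s) (Y := Y5) hcP5Q5 hcQ5Z4 rfl (fun _ _ => Iff.rfl) rfl
        G5.2.1 G5.2.2.1 hQ5tgt x y).symm
    · intro x y
      constructor
      · intro he
        rcases (eoRZ x y).mp he with h | h
        · rcases (G5.2.2.2.1 x y).mp h with h' | h'
          · exact Or.inl h'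
          · exact Or.inr (Or.inl h')
        · exact Or.inr (Or.inr h)
      · rintro (h | h | h)
        · exact (eoRZ x y).mpr (Or.inl ((G5.2.2.2.1 x y).mpr (Or.inl h)))
        · exact (eoRZ x y).mpr (Or.inl ((G5.2.2.2.1 x y).mpr (Or.inr h)))
        · exact (eoRZ x y).mpr (Or.inr h)
    · rw [srcRZ]; exact G5.2.2.2.2.1
    · exact tgtRZ
    · intro x hx; rfl
    · intro x hx
      show X4s.lab x = if x ∈ Q₅.events then Q₅.lab x else Z4s.lab x
      by_cases hq : x ∈ Q₅.events
      · rw [if_pos hq]; rfl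
      · rw [if_neg hq]
        have hz : x ∈ Z4s.events := by
          rcases Finset.mem_union.mp hx with h | h
          · exact absurd h hq
          · exact h
        exact labRZ2 x hz
  refine ⟨Y5, X4s, ⟨Q₅, Z4s, Y5, ?_, ?_, IpoIso.refl Y5, GY⟩,
    ⟨P₅, Y5, X4s, ?_, IpoIso.refl Y5, IpoIso.refl X4s, GX⟩, j3.trans (sharpen_iso hX₄)⟩
  · exact i2.trans ((sharpen_iso hQ₁).trans ⟨r, rQ⟩)
  · exact j2.trans (sharpen_iso hZ₄)
  · exact i1.trans ((sharpen_iso hP₁).trans ⟨r, rP⟩)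

end BigBwd


section Main
variable {P Q : Ipomset E A}

lemma coherent_suffix {l u : List (Ipomset E A)} (h : Coherent (u ++ l)) : Coherent l :=
  ⟨fun T hT => h.1 T (List.mem_append_right u hT), (List.isChain_append.mp h.2).2.1⟩

lemma Ipomset.IsIdentity.src_eq_tgt' {P : Ipomset E A} (h : P.IsIdentity) :
    P.srcIface = P.tgtIface := by
  apply Conclist.ext'
  · show P.src = P.tgt
    rw [h.2.1, h.2.2]
  · funext x y
    apply propext
    show x ∈ P.src ∧ y ∈ P.src ∧ P.evord x y ↔ x ∈ P.tgt ∧ y ∈ P.tgt ∧ P.evord x y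
    rw [h.2.1, h.2.2]
  · funext x
    show (if x ∈ P.src then some (P.lab x) else none) =
      (if x ∈ P.tgt then some (P.lab x) else none)
    rw [h.2.1, h.2.2]

lemma last_removal : ∀ (u : List (Ipomset E A)), u ≠ [] → P.IsIdentity →
    ∀ R, GlueWord (u ++ [P]) R → ∃ R', GlueWord u R' ∧ IpoIso R R' := by
  intro u
  induction u with
  | nil => intro h; exact absurd rfl h
  | cons a u' ih =>
    intro _ hP R h
    rw [List.cons_append] at h
    by_cases hu' : u' = []
    · subst hu'
      obtain ⟨M, hM, hg⟩ := glueWord_cons_inv h rfl (by simp)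
      have hMP : M = P := glueWord_singleton_inv hM
      subst hMP
      exact ⟨a, GlueWord.single a, hg.ident_right hP⟩
    · have hne : u' ++ [P] ≠ [] := by simp
      obtain ⟨M, hM, hg⟩ := glueWord_cons_inv h rfl hne
      obtain ⟨M', hM', hiso⟩ := ih hu' hP M hM
      exact ⟨R, GlueWord.cons a u' M' R hM'
        (hg.congr' (IpoIso.refl a) hiso (IpoIso.refl R)), IpoIso.refl R⟩

lemma last_insert : ∀ (u : List (Ipomset E A)), u ≠ [] → P.IsIdentity →
    Coherent (u ++ [P]) →
    ∀ R, GlueWord u R → ∃ R', GlueWord (u ++ [P]) R' ∧ IpoIso R R' := by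
  intro u
  induction u with
  | nil => intro h; exact absurd rfl h
  | cons a u' ih =>
    intro _ hP hco R h
    by_cases hu' : u' = []
    · subst hu'
      have hRa : R = a := glueWord_singleton_inv h
      subst hRa
      have hcl : ClIso R.tgtIface P.srcIface := by
        have h2 := hco.2
        rw [List.cons_append, List.nil_append] at h2
        exact (List.isChain_cons_cons.mp h2).1
      refine ⟨R, ?_, IpoIso.refl R⟩
      rw [List.cons_append, List.nil_append]
      exact GlueWord.cons R [P] P R (GlueWord.single P) (isGluing_idOnTgt hP hcl)
    · obtain ⟨M, hM, hg⟩ := glueWord_cons_inv h rfl hu'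
      have hco' : Coherent (u' ++ [P]) := by
        refine ⟨fun T hT => hco.1 T ?_, ?_⟩
        · rw [List.cons_append]
          exact List.mem_cons_of_mem a hT
        · have := hco.2
          rw [List.cons_append] at this
          exact this.tail
      obtain ⟨M', hM', hiso⟩ := ih hu' hP hco' M hM
      refine ⟨R, ?_, IpoIso.refl R⟩
      rw [List.cons_append]
      exact GlueWord.cons a (u' ++ [P]) M' R hM'
        (hg.congr' (IpoIso.refl a) hiso (IpoIso.refl R))

lemma step_main {w₁ w₂ : List (Ipomset E A)} (he : StepEquiv w₁ w₂) :
    (∀ R₁, GlueWord w₁ R₁ → ∃ R₂, GlueWord w₂ R₂ ∧ IpoIso R₁ R₂) ∧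
    (∀ R₂, GlueWord w₂ R₂ → ∃ R₁, GlueWord w₁ R₁ ∧ IpoIso R₂ R₁) := by
  induction he with
  | glue u v P Q R hco hst hglue =>
    have hPd : P.Discrete := by rcases hst with ⟨h1, _⟩ | ⟨h1, _⟩ <;> exact h1.1
    have hQd : Q.Discrete := by rcases hst with ⟨_, h2⟩ | ⟨_, h2⟩ <;> exact h2.1
    have hlet : ∀ T ∈ v, StepLetter T := fun T hT =>
      hco.1 T (List.mem_append_right u
        (List.mem_cons_of_mem P (List.mem_cons_of_mem Q hT)))
    constructor
    · apply prefix_transfer u (by simp)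
      intro S hS
      obtain ⟨M, hM, hgPM⟩ := glueWord_cons_inv hS rfl (by simp)
      by_cases hv : v = []
      · subst hv
        have hMQ : M = Q := glueWord_singleton_inv hM
        subst hMQ
        exact ⟨R, GlueWord.single R, hgPM.unique' hglue (IpoIso.refl _)⟩
      · obtain ⟨N, hN, hgQN⟩ := glueWord_cons_inv hM rfl hv
        have hZinv : EvInv N := glueWord_evInv hlet hN
        obtain ⟨W, hRW, hiso⟩ := glue_fwd hPd hQd hZinv hglue hgQN hgPM
        exact ⟨W, GlueWord.cons R v N W hN hRW, hiso⟩
    · apply prefix_transfer u (by simp)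
      intro S hS
      by_cases hv : v = []
      · subst hv
        have hSR : S = R := glueWord_singleton_inv hS
        subst hSR
        exact ⟨S, GlueWord.cons P [Q] Q S (GlueWord.single Q) hglue, IpoIso.refl S⟩
      · obtain ⟨N, hN, hgRN⟩ := glueWord_cons_inv hS rfl hv
        have hZinv : EvInv N := glueWord_evInv hlet hN
        obtain ⟨Y, W, hQY, hPW, hiso⟩ := glue_bwd hPd hQd hZinv hglue hgRN
        exact ⟨W, GlueWord.cons P (Q :: v) Y W (GlueWord.cons Q v N Y hN hQY) hPW, hiso⟩
  | ident u v P hco hid hne =>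
    by_cases hv : v = []
    · subst hv
      have hu : u ≠ [] := by simpa using hne
      constructor
      · intro R h
        rw [List.append_nil]
        exact last_removal u hu hid R h
      · intro R h
        rw [List.append_nil] at h
        exact last_insert u hu hid hco R h
    · obtain ⟨b, v', rfl⟩ := List.exists_cons_of_ne_nil hv
      constructor
      · apply prefix_transfer u (by simp)
        intro S hS
        obtain ⟨N, hN, hg⟩ := glueWord_cons_inv hS rfl (by simp)
        exact ⟨N, hN, hg.ident_left hid⟩
      · apply prefix_transfer u (by simp)
        intro S hS
        have hcl1 : ClIso P.tgtIface b.srcIface := by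
          have h2 := (coherent_suffix (l := P :: b :: v') hco).2
          exact (List.isChain_cons_cons.mp h2).1
        have hcl : ClIso P.srcIface S.srcIface :=
          (clIso_of_eq hid.src_eq_tgt').trans (hcl1.trans (glueWord_clIso_src hS))
        exact ⟨S, GlueWord.cons P (b :: v') S S hS (isGluing_idOnSrc hid hcl),
          IpoIso.refl S⟩
  | iso u v P Q hco hiso =>
    constructor
    · apply prefix_transfer u (by simp)
      intro S hS
      by_cases hv : v = []
      · subst hv
        have hSP : S = P := glueWord_singleton_inv hS
        subst hSP
        exact ⟨Q, GlueWord.single Q, hiso⟩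
      · obtain ⟨N, hN, hg⟩ := glueWord_cons_inv hS rfl hv
        exact ⟨S, GlueWord.cons Q v N S hN
          (hg.congr' hiso (IpoIso.refl N) (IpoIso.refl S)), IpoIso.refl S⟩
    · apply prefix_transfer u (by simp)
      intro S hS
      by_cases hv : v = []
      · subst hv
        have hSQ : S = Q := glueWord_singleton_inv hS
        subst hSQ
        exact ⟨P, GlueWord.single P, hiso.symm⟩
      · obtain ⟨N, hN, hg⟩ := glueWord_cons_inv hS rfl hv
        exact ⟨S, GlueWord.cons P v N S hN
          (hg.congr' hiso.symm (IpoIso.refl N) (IpoIso.refl S)), IpoIso.refl S⟩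
  | refl w =>
    exact ⟨fun R h => ⟨R, h, IpoIso.refl R⟩, fun R h => ⟨R, h, IpoIso.refl R⟩⟩
  | symm _ ih => exact ⟨ih.2, ih.1⟩
  | trans _ _ ih1 ih2 =>
    constructor
    · intro R h
      obtain ⟨R2, h2, i2⟩ := ih1.1 R h
      obtain ⟨R3, h3, i3⟩ := ih2.1 R2 h2
      exact ⟨R3, h3, i2.trans i3⟩
    · intro R h
      obtain ⟨R2, h2, i2⟩ := ih2.2 R h
      obtain ⟨R3, h3, i3⟩ := ih1.2 R2 h2
      exact ⟨R3, h3, i2.trans i3⟩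

end Main

end Aux

/-- If coherent words of starters and terminators are equivalent
under the congruence `~`, then their gluings agree up to isomorphism. -/
theorem stepEquiv_gluings_iso [DecidableEq E]
    (w₁ w₂ : List (Ipomset E A)) (h₁ : Coherent w₁) (h₂ : Coherent w₂)
    (he : StepEquiv w₁ w₂) (R₁ R₂ : Ipomset E A)
    (g₁ : GlueWord w₁ R₁) (g₂ : GlueWord w₂ R₂) :
    IpoIso R₁ R₂ := by
  obtain ⟨R₂', h₂', hiso⟩ := (step_main he).1 R₁ g₁
  exact hiso.trans (glueWord_unique h₂' g₂)
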